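/- arXiv:1206.0213 — 4 statements merged into one kernel-verified Lean document; each statement's English description precedes it below -/
import Mathlib

section
/- Let F be a homeomorphism of a connected surface N, with universal cover whose deck group has trivial center, and suppose F admits a lift F̂ commuting with all deck transformations. Then any two paths α and β from the same point z to F(z), each adapted to F (i.e., conjugating the fundamental group action as α·F(γ)·α⁻ ≃ γ for all loops γ at z), are homotopic rel endpoints in N. -/
open Set Topology Metric unitInterval CategoryTheory

namespace AdaptedAux

variable {E X : Type*} [TopologicalSpace E] [TopologicalSpace X] {p : E → X}

/-- Pasting lemma for `ContinuousOn` over a union of two closed sets. -/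
lemma glue_continuousOn {Z Y : Type*} [TopologicalSpace Z] [TopologicalSpace Y]
    {s q : Set Z} (hs : IsClosed s) (hq : IsClosed q) {f g h : Z → Y}
    (hg : ContinuousOn g s) (hh : ContinuousOn h q) (he : EqOn g h (s ∩ q))
    (hfq : EqOn f h q) (hfs : ∀ z ∈ s, z ∉ q → f z = g z) :
    ContinuousOn f (s ∪ q) := by
  have hfg : EqOn f g s := by
    intro z hz
    by_cases hzq : z ∈ q
    · exact (hfq hzq).trans (he ⟨hz, hzq⟩).symm
    · exact hfs z hz hzq
  intro z hz
  have Hs : z ∈ s → ContinuousWithinAt f s z := fun hzs =>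
    ((hg z hzs).congr hfg (hfg hzs))
  have Hq : z ∈ q → ContinuousWithinAt f q z := fun hzq =>
    ((hh z hzq).congr hfq (hfq hzq))
  rcases hz with hzs | hzq
  · by_cases hzq : z ∈ q
    · exact (Hs hzs).union (Hq hzq)
    · have hmem : qᶜ ∈ 𝓝 z := hq.isOpen_compl.mem_nhds hzq
      rw [← continuousWithinAt_inter hmem]
      refine (Hs hzs).mono ?_
      rintro w ⟨hw1, hw2⟩
      rcases hw1 with h1 | h1
      exacts [h1, absurd h1 hw2]
  · by_cases hzs : z ∈ s
    · exact (Hs hzs).union (Hq hzq)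
    · have hmem : sᶜ ∈ 𝓝 z := hs.isOpen_compl.mem_nhds hzs
      rw [← continuousWithinAt_inter hmem]
      refine (Hq hzq).mono ?_
      rintro w ⟨hw1, hw2⟩
      rcases hw1 with h1 | h1
      exacts [absurd h1 hw2, h1]

/-- Extension of a partial lift over an evenly covered set. -/
lemma extend_lift (hp : IsCoveringMap p) {Z : Type*} [TopologicalSpace Z]
    {f : Z → X} (hf : Continuous f) {R Q : Set Z} (hR : IsClosed R) (hQ : IsClosed Q)
    (hA : IsPreconnected (R ∩ Q)) (hne : (R ∩ Q).Nonempty)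
    {x₀ : X} [Nonempty (p ⁻¹' {x₀})] (hQU : ∀ z ∈ Q, f z ∈ (hp x₀).toTrivialization.baseSet)
    {g : Z → E} (hg : ContinuousOn g R) (hpg : ∀ z ∈ R, p (g z) = f z) :
    ∃ g' : Z → E, ContinuousOn g' (R ∪ Q) ∧ (∀ z ∈ R ∪ Q, p (g' z) = f z) ∧ EqOn g' g R := by
  classical
  set t := (hp x₀).toTrivialization with ht
  have hdisc : DiscreteTopology (p ⁻¹' {x₀}) := (hp x₀).1
  obtain ⟨a₀, ha₀⟩ := hne
  set i₀ : p ⁻¹' {x₀} := (t (g a₀)).2 with hi₀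
  have hsrc : ∀ z ∈ R ∩ Q, g z ∈ t.source := fun z hz =>
    t.mem_source.2 (by rw [hpg z hz.1]; exact hQU z hz.2)
  have hconst : ∀ z ∈ R ∩ Q, (t (g z)).2 = i₀ := by
    have hcont : ContinuousOn (fun z => (t (g z)).2) (R ∩ Q) := by
      refine continuous_snd.comp_continuousOn
        (t.continuousOn_toFun.comp (hg.mono inter_subset_left) ?_)
      intro z hz; exact hsrc z hz
    have himg : IsPreconnected ((fun z => (t (g z)).2) '' (R ∩ Q)) := hA.image _ hcont
    intro z hz
    exact himg.subsingleton (mem_image_of_mem _ hz) (mem_image_of_mem _ ha₀)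
  have htarget : ∀ z ∈ Q, ((f z, i₀) : X × (p ⁻¹' {x₀})) ∈ t.target := fun z hz =>
    t.mem_target.2 (hQU z hz)
  set sec : Z → E := fun z => t.toPartialHomeomorph.symm (f z, i₀) with hsec
  have hval : ∀ z ∈ R ∩ Q, g z = sec z := by
    intro z hz
    have h1 : t.toPartialHomeomorph.symm (p (g z), (t (g z)).2) = g z :=
      t.symm_apply_mk_proj (hsrc z hz)
    rw [hsec]; rw [← h1, hpg z hz.1, hconst z hz]
  have hseccont : ContinuousOn sec Q := by
    refine t.toPartialHomeomorph.continuousOn_symm.comp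
      ((hf.prodMk continuous_const).continuousOn) ?_
    intro z hz; exact htarget z hz
  refine ⟨fun z => if z ∈ Q then sec z else g z, ?_, ?_, ?_⟩
  · exact glue_continuousOn hR hQ hg hseccont hval
      (fun z hz => by simp only [if_pos hz]) (fun z hz hzq => by simp only [if_neg hzq])
  · intro z hz
    by_cases hzq : z ∈ Q
    · simp only [if_pos hzq, hsec]
      exact t.proj_symm_apply (htarget z hzq)
    · rcases hz with hzR | h
      · simp only [if_neg hzq]; exact hpg z hzR
      · exact absurd h hzq
  · intro z hz
    by_cases hzq : z ∈ Q
    · simp only [if_pos hzq]; exact (hval z ⟨hz, hzq⟩).symm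
    · simp only [if_neg hzq]

lemma range_isClopen (hp : IsCoveringMap p) : IsClopen (range p) := by
  constructor
  · rw [← isOpen_compl_iff, isOpen_iff_mem_nhds]
    intro x hx
    obtain ⟨_, U, hxU, hU, -, Hh, -⟩ := hp x
    refine Filter.mem_of_superset (hU.mem_nhds hxU) ?_
    rintro y hy ⟨e, rfl⟩
    exact hx ⟨((Hh ⟨e, hy⟩).2 : E), (Hh ⟨e, hy⟩).2.2⟩
  · exact hp.isOpenMap.isOpen_range

/-- Lifting on a vertical strip. -/
lemma strip_lift (hp : IsCoveringMap p) {H : ℝ × ℝ → X} (hH : Continuous H)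
    {e : E} (h0 : ∀ s, H (s, 0) = p e) (s₀ : ℝ) :
    ∃ δ > (0:ℝ), ∃ G : ℝ × ℝ → E,
      ContinuousOn G (closedBall s₀ δ ×ˢ Icc (0:ℝ) 1) ∧
      (∀ z ∈ closedBall s₀ δ ×ˢ Icc (0:ℝ) 1, p (G z) = H z) ∧
      ∀ s ∈ closedBall s₀ δ, G (s, 0) = e := by
  have hrange : H ⁻¹' range p = univ :=
    ((range_isClopen hp).preimage hH).eq_univ ⟨(0, 0), ⟨e, (h0 0).symm⟩⟩
  have hnon : ∀ w, Nonempty (p ⁻¹' {H w}) := fun w => by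
    have hw : w ∈ H ⁻¹' range p := hrange ▸ trivial
    obtain ⟨e', he'⟩ := hw
    exact ⟨⟨e', he'⟩⟩
  have hcov : ({s₀} ×ˢ Icc (0:ℝ) 1) ⊆ ⋃ w : ℝ × ℝ, H ⁻¹' (hp (H w)).toTrivialization.baseSet := by
    intro z _
    exact mem_iUnion.2 ⟨z, (hp (H z)).mem_toTrivialization_baseSet⟩
  obtain ⟨δ, hδ, hball⟩ := lebesgue_number_lemma_of_metric
    (isCompact_singleton.prod isCompact_Icc)
    (fun w => hH.isOpen_preimage _ (hp (H w)).toTrivialization.open_baseSet) hcov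
  obtain ⟨n, hn⟩ := exists_nat_one_div_lt hδ
  set m : ℕ := n + 1 with hm
  have hmpos : (0:ℝ) < m := by positivity
  have hm1 : 1 / (m:ℝ) < δ := by exact_mod_cast hn
  set B : Set ℝ := closedBall s₀ (δ/2) with hB
  have key : ∀ i : ℕ, i ≤ m → ∃ G : ℝ × ℝ → E,
      ContinuousOn G (B ×ˢ Icc (0:ℝ) (i/m)) ∧
      (∀ z ∈ B ×ˢ Icc (0:ℝ) ((i:ℝ)/m), p (G z) = H z) ∧
      (∀ s ∈ B, G (s, 0) = e) := by
    intro i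
    induction i with
    | zero =>
      intro _
      refine ⟨fun _ => e, continuousOn_const, ?_, fun s _ => rfl⟩
      rintro ⟨s, u⟩ ⟨hs, hu⟩
      simp only [Nat.cast_zero, zero_div] at hu
      have hu0 : u = 0 := le_antisymm hu.2 hu.1
      rw [hu0, h0 s]
    | succ i ih =>
      intro hi
      obtain ⟨G, hGc, hGp, hGe⟩ := ih (Nat.le_of_succ_le hi)
      have him : (i:ℝ)/m ≤ 1 := by
        apply div_le_one_of_le₀
        · exact_mod_cast Nat.le_of_succ_le hi
        · positivity
      have h0i : (0:ℝ) ≤ (i:ℝ)/m := by positivity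
      have hii : (i:ℝ)/m ≤ ((i:ℝ)+1)/m :=
        (div_le_div_iff_of_pos_right hmpos).mpr (by linarith)
      set R : Set (ℝ × ℝ) := B ×ˢ Icc (0:ℝ) ((i:ℝ)/m) with hR
      set Q : Set (ℝ × ℝ) := B ×ˢ Icc ((i:ℝ)/m) (((i:ℝ)+1)/m) with hQ
      have hKmem : ((s₀, (i:ℝ)/m) : ℝ × ℝ) ∈ {s₀} ×ˢ Icc (0:ℝ) 1 :=
        ⟨rfl, h0i, him⟩
      obtain ⟨x₀, hx₀⟩ := hball _ hKmem
      have hQU : ∀ z ∈ Q, H z ∈ (hp (H x₀)).toTrivialization.baseSet := by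
        intro z hz
        apply hx₀
        rw [mem_ball]
        obtain ⟨s, u⟩ := z
        obtain ⟨hs, hu⟩ := hz
        rw [Prod.dist_eq]
        simp only [sup_lt_iff]
        constructor
        · have : dist s s₀ ≤ δ/2 := hs
          linarith
        · rw [Real.dist_eq]
          have hsplit : ((i:ℝ)+1)/m = (i:ℝ)/m + 1/m := by ring
          have h1 : u - (i:ℝ)/m ≤ 1/m := by
            have := hu.2; rw [hsplit] at this; linarith
          have h2 : -(1/(m:ℝ)) ≤ u - (i:ℝ)/m := by
            have := hu.1
            have hmn : (0:ℝ) < 1/m := by positivity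
            linarith
          have : |u - (i:ℝ)/m| ≤ 1/m := abs_le.2 ⟨h2, h1⟩
          linarith
      have hRc : IsClosed R := (Metric.isClosed_closedBall).prod isClosed_Icc
      have hQc : IsClosed Q := (Metric.isClosed_closedBall).prod isClosed_Icc
      have hRQ : R ∩ Q = B ×ˢ ({(i:ℝ)/m} : Set ℝ) := by
        rw [hR, hQ, prod_inter_prod, inter_self, Icc_inter_Icc,
          max_eq_right h0i, min_eq_left hii, Icc_self]
      have hA : IsPreconnected (R ∩ Q) := by
        rw [hRQ, prod_singleton]
        exact ((convex_closedBall s₀ (δ/2)).isPreconnected).image _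
          (Continuous.continuousOn (continuous_id.prodMk continuous_const))
      have hne : (R ∩ Q).Nonempty := by
        rw [hRQ]
        exact ⟨(s₀, (i:ℝ)/m), mem_closedBall_self (by positivity), rfl⟩
      obtain ⟨G', hc, hcorr, heq⟩ := extend_lift hp hH hRc hQc hA hne hQU hGc hGp
      have hunion : R ∪ Q = B ×ˢ Icc (0:ℝ) (((i:ℝ)+1)/m) := by
        rw [hR, hQ, ← prod_union, Icc_union_Icc_eq_Icc h0i hii]
      have hcast : ((i+1 : ℕ):ℝ) = (i:ℝ) + 1 := by push_cast; ring
      refine ⟨G', ?_, ?_, ?_⟩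
      · rw [hcast, ← hunion]; exact hc
      · rw [hcast, ← hunion]; exact hcorr
      · intro s hs
        have hsR : ((s, (0:ℝ)) : ℝ × ℝ) ∈ R := ⟨hs, le_refl 0, h0i⟩
        rw [heq hsR]; exact hGe s hs
  obtain ⟨G, h1, h2, h3⟩ := key m le_rfl
  have hmm : (m:ℝ)/m = 1 := div_self (ne_of_gt hmpos)
  refine ⟨δ/2, by positivity, G, ?_, ?_, h3⟩
  · rw [← hmm]; exact h1
  · rw [← hmm]; exact h2

/-- Lifting of squares (homotopy lifting, with constant initial edge). -/
lemma square_lift (hp : IsCoveringMap p) {H : ℝ × ℝ → X} (hH : Continuous H)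
    (hclamp : ∀ s t, H (s, t) = H (s, max 0 (min 1 t)))
    {e : E} (h0 : ∀ s, H (s, 0) = p e) :
    ∃ G : ℝ × ℝ → E, Continuous G ∧ (∀ z, p (G z) = H z) ∧ ∀ s, G (s, 0) = e := by
  have h := fun s₀ : ℝ => strip_lift hp hH h0 s₀
  choose δ hδ Gs hGc hGp hGe using h
  set cl : ℝ → ℝ := fun t => max 0 (min 1 t) with hcl
  have hclcont : Continuous cl := continuous_const.max (continuous_const.min continuous_id)
  have hclmem : ∀ t, cl t ∈ Icc (0:ℝ) 1 := fun t =>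
    ⟨le_max_left _ _, max_le zero_le_one (min_le_left _ _)⟩
  have hcl0 : cl 0 = 0 := by norm_num [hcl]
  have hmemB : ∀ s, s ∈ closedBall s (δ s) := fun s => mem_closedBall_self (le_of_lt (hδ s))
  have huniq : ∀ s₀ s₁ s, s ∈ closedBall s₀ (δ s₀) → s ∈ closedBall s₁ (δ s₁) →
      ∀ t ∈ Icc (0:ℝ) 1, Gs s₀ (s, t) = Gs s₁ (s, t) := by
    intro s₀ s₁ s hs0 hs1
    have c0 : ContinuousOn (fun t => Gs s₀ (s, t)) (Icc (0:ℝ) 1) :=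
      (hGc s₀).comp (Continuous.continuousOn (continuous_const.prodMk continuous_id))
        (fun t ht => ⟨hs0, ht⟩)
    have c1 : ContinuousOn (fun t => Gs s₁ (s, t)) (Icc (0:ℝ) 1) :=
      (hGc s₁).comp (Continuous.continuousOn (continuous_const.prodMk continuous_id))
        (fun t ht => ⟨hs1, ht⟩)
    have heqp : EqOn (p ∘ fun t => Gs s₀ (s,t)) (p ∘ fun t => Gs s₁ (s,t)) (Icc (0:ℝ) 1) := by
      intro t ht
      show p (Gs s₀ (s,t)) = p (Gs s₁ (s,t))
      rw [hGp s₀ (s,t) ⟨hs0, ht⟩, hGp s₁ (s,t) ⟨hs1, ht⟩]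
    exact hp.eqOn_of_comp_eqOn isPreconnected_Icc c0 c1 heqp
      (⟨le_refl (0:ℝ), zero_le_one⟩ : (0:ℝ) ∈ Icc (0:ℝ) 1)
      (by rw [hGe s₀ s hs0, hGe s₁ s hs1])
  refine ⟨fun z => Gs z.1 (z.1, cl z.2), ?_, ?_, ?_⟩
  · rw [continuous_iff_continuousAt]
    intro z₀
    have hO : IsOpen (ball z₀.1 (δ z₀.1) ×ˢ (univ : Set ℝ)) := isOpen_ball.prod isOpen_univ
    have hmem : z₀ ∈ ball z₀.1 (δ z₀.1) ×ˢ (univ : Set ℝ) := ⟨mem_ball_self (hδ z₀.1), trivial⟩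
    have hGc1 : ContinuousOn (fun z : ℝ×ℝ => Gs z₀.1 (z.1, cl z.2))
        (ball z₀.1 (δ z₀.1) ×ˢ (univ : Set ℝ)) := by
      refine (hGc z₀.1).comp (Continuous.continuousOn ?_) ?_
      · exact continuous_fst.prodMk (hclcont.comp continuous_snd)
      · rintro ⟨s,t⟩ ⟨hs, -⟩
        exact ⟨ball_subset_closedBall hs, hclmem t⟩
    have hcg : ContinuousOn (fun z : ℝ×ℝ => Gs z.1 (z.1, cl z.2))
        (ball z₀.1 (δ z₀.1) ×ˢ (univ : Set ℝ)) := by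
      refine hGc1.congr ?_
      rintro ⟨s,t⟩ ⟨hs, -⟩
      exact huniq s z₀.1 s (hmemB s) (ball_subset_closedBall hs) (cl t) (hclmem t)
    exact hcg.continuousAt (hO.mem_nhds hmem)
  · intro z
    have hz := hGp z.1 (z.1, cl z.2) ⟨hmemB z.1, hclmem z.2⟩
    rw [hz]
    exact (hclamp z.1 z.2).symm
  · intro s
    show Gs s (s, cl 0) = e
    rw [hcl0]
    exact hGe s s (hmemB s)

lemma sigma_coe (t : I) : projIcc (0:ℝ) 1 zero_le_one (t : ℝ) = t :=
  projIcc_val zero_le_one t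

lemma sigma_clamp (t : ℝ) :
    projIcc (0:ℝ) 1 zero_le_one (max 0 (min 1 t)) = projIcc (0:ℝ) 1 zero_le_one t := by
  have h1 : max 0 (min 1 t) = ((projIcc (0:ℝ) 1 zero_le_one t : I) : ℝ) := by
    rw [coe_projIcc]
  rw [h1, sigma_coe]

lemma sigma_zero : projIcc (0:ℝ) 1 zero_le_one 0 = 0 := by
  apply Subtype.ext
  rw [coe_projIcc]
  norm_num

lemma sigma_one : projIcc (0:ℝ) 1 zero_le_one 1 = 1 := by
  apply Subtype.ext
  rw [coe_projIcc]
  norm_num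

/-- Path lifting. -/
lemma exists_path_lift (hp : IsCoveringMap p) {x y : X} (γ : Path x y) (e : E)
    (he : p e = x) : ∃ (e' : E) (g : Path e e'), ∀ t, p (g t) = γ t := by
  set sg : ℝ → I := projIcc (0:ℝ) 1 zero_le_one with hsg
  set H : ℝ × ℝ → X := fun z => γ (sg z.2) with hHdef
  have hH : Continuous H := γ.continuous.comp (continuous_projIcc.comp continuous_snd)
  have hclamp : ∀ s t, H (s, t) = H (s, max 0 (min 1 t)) := by
    intro s t
    show γ (sg t) = γ (sg (max 0 (min 1 t)))
    rw [hsg, sigma_clamp]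
  have h0 : ∀ s, H (s, 0) = p e := by
    intro s
    show γ (sg 0) = p e
    rw [hsg, sigma_zero, γ.source, he]
  obtain ⟨G, hGc, hGp, hGe⟩ := square_lift hp hH hclamp h0
  refine ⟨G (0, 1), ⟨⟨fun t => G (0, (t:ℝ)), ?_⟩, ?_, ?_⟩, ?_⟩
  · exact hGc.comp (continuous_const.prodMk continuous_subtype_val)
  · show G (0, ((0:I):ℝ)) = e
    simpa using hGe 0
  · show G (0, ((1:I):ℝ)) = G (0,1)
    norm_num
  · intro t
    show p (G (0, (t:ℝ))) = γ t
    rw [hGp (0, (t:ℝ))]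
    show γ (sg (t:ℝ)) = γ t
    rw [hsg, sigma_coe]

/-- Uniqueness of path lifts (endpoints). -/
lemma path_lift_unique (hp : IsCoveringMap p) {e e₁ e₂ : E}
    (g₁ : Path e e₁) (g₂ : Path e e₂) (h : ∀ t, p (g₁ t) = p (g₂ t)) : e₁ = e₂ := by
  have : PreconnectedSpace I := inferInstance
  have := hp.eq_of_comp_eq (A := I) g₁.continuous g₂.continuous
    (funext fun t => h t) 0 (by simp)
  have h1 : g₁ 1 = g₂ 1 := congrFun this 1
  simpa using h1

/-- Monodromy: homotopic paths have lifts with the same endpoint. -/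
lemma lift_end_eq (hp : IsCoveringMap p) {x y : X}
    {γ₁ γ₂ : Path x y} (hγ : γ₁.Homotopic γ₂) {e e₁ e₂ : E}
    (g₁ : Path e e₁) (g₂ : Path e e₂)
    (h₁ : ∀ t, p (g₁ t) = γ₁ t) (h₂ : ∀ t, p (g₂ t) = γ₂ t) : e₁ = e₂ := by
  obtain ⟨Hh⟩ := hγ
  set sg : ℝ → I := projIcc (0:ℝ) 1 zero_le_one with hsg
  set Hm : ℝ × ℝ → X := fun z => Hh (sg z.1, sg z.2) with hHm
  have hHc : Continuous Hm := Hh.continuous.comp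
    ((continuous_projIcc.comp continuous_fst).prodMk (continuous_projIcc.comp continuous_snd))
  have hclamp : ∀ s t, Hm (s, t) = Hm (s, max 0 (min 1 t)) := by
    intro s t
    show Hh (sg s, sg t) = Hh (sg s, sg (max 0 (min 1 t)))
    rw [hsg, sigma_clamp]
  have hpe : p e = x := by
    have h := h₁ 0
    rw [g₁.source] at h
    rw [h, γ₁.source]
  have h0 : ∀ s, Hm (s, 0) = p e := by
    intro s
    show Hh (sg s, sg 0) = p e
    rw [hsg, sigma_zero, Hh.source, hpe]
  obtain ⟨G, hGc, hGp, hGe⟩ := square_lift hp hHc hclamp h0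
  have hleft : e₁ = G (0, 1) := by
    have hcg : Continuous (fun t : I => G (0, (t:ℝ))) :=
      hGc.comp (continuous_const.prodMk continuous_subtype_val)
    have hco : p ∘ ⇑g₁ = p ∘ (fun t : I => G (0, (t:ℝ))) := by
      funext t
      show p (g₁ t) = p (G (0, (t:ℝ)))
      rw [h₁ t, hGp (0, (t:ℝ))]
      show γ₁ t = Hh (sg 0, sg (t:ℝ))
      rw [hsg, sigma_zero, sigma_coe]
      exact (Hh.apply_zero t).symm
    have h00 : g₁ 0 = (fun t : I => G (0, (t:ℝ))) 0 := by
      rw [g₁.source]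
      show e = G (0, ((0:I):ℝ))
      simpa using (hGe 0).symm
    have := hp.eq_of_comp_eq (A := I) g₁.continuous hcg hco 0 h00
    have h1 := congrFun this 1
    rw [g₁.target] at h1
    simpa using h1
  have hright : e₂ = G (1, 1) := by
    have hcg : Continuous (fun t : I => G (1, (t:ℝ))) :=
      hGc.comp (continuous_const.prodMk continuous_subtype_val)
    have hco : p ∘ ⇑g₂ = p ∘ (fun t : I => G (1, (t:ℝ))) := by
      funext t
      show p (g₂ t) = p (G (1, (t:ℝ)))
      rw [h₂ t, hGp (1, (t:ℝ))]
      show γ₂ t = Hh (sg 1, sg (t:ℝ))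
      rw [hsg, sigma_one, sigma_coe]
      exact (Hh.apply_one t).symm
    have h00 : g₂ 0 = (fun t : I => G (1, (t:ℝ))) 0 := by
      rw [g₂.source]
      show e = G (1, ((0:I):ℝ))
      simpa using (hGe 1).symm
    have := hp.eq_of_comp_eq (A := I) g₂.continuous hcg hco 0 h00
    have h1 := congrFun this 1
    rw [g₂.target] at h1
    simpa using h1
  have htop : G (0, 1) = G (1, 1) := by
    refine hp.const_of_comp (A := ℝ)
      (hGc.comp (continuous_id.prodMk continuous_const)) ?_ 0 1
    intro a a'
    show p (G (a, 1)) = p (G (a', 1))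
    rw [hGp (a, 1), hGp (a', 1)]
    show Hh (sg a, sg 1) = Hh (sg a', sg 1)
    rw [hsg, sigma_one, Hh.target, Hh.target]
  rw [hleft, hright, htop]

/-- Pushing a homotopy of lifts down. -/
lemma homotopic_of_lifts [SimplyConnectedSpace E] (hp : IsCoveringMap p)
    {x y : X} (γ₁ γ₂ : Path x y) {e e₁ e₂ : E} (g₁ : Path e e₁) (g₂ : Path e e₂)
    (h₁ : ∀ t, p (g₁ t) = γ₁ t) (h₂ : ∀ t, p (g₂ t) = γ₂ t) (hend : e₁ = e₂) :
    γ₁.Homotopic γ₂ := by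
  subst hend
  obtain ⟨Hh⟩ := SimplyConnectedSpace.paths_homotopic g₁ g₂
  refine ⟨⟨⟨⟨fun st => p (Hh st), hp.continuous.comp Hh.continuous⟩, ?_, ?_⟩, ?_⟩⟩
  · intro t; exact (congrArg p (Hh.apply_zero t)).trans (h₁ t)
  · intro t; exact (congrArg p (Hh.apply_one t)).trans (h₂ t)
  · intro s t ht
    rcases ht with ht | ht
    · have h0 : (t:I) = 0 := by simpa using ht
      subst h0
      show p (Hh (s, 0)) = γ₁ 0
      rw [Hh.source]; exact (congrArg p g₁.source.symm).trans ((h₁ 0).trans (by simp))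
    · have h1 : (t:I) = 1 := by simpa using ht
      subst h1
      show p (Hh (s, 1)) = γ₁ 1
      rw [Hh.target]; exact (congrArg p g₁.target.symm).trans ((h₁ 1).trans (by simp))

/-- Surjectivity of a covering map with connected base and nonempty total space. -/
lemma cov_surjective (hp : IsCoveringMap p) [PreconnectedSpace X] [Nonempty E] :
    Function.Surjective p := by
  have hclopen : IsClopen (range p) := by
    constructor
    · rw [← isOpen_compl_iff, isOpen_iff_mem_nhds]
      intro x hx
      obtain ⟨_, U, hxU, hU, -, Hh, -⟩ := hp x
      refine Filter.mem_of_superset (hU.mem_nhds hxU) ?_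
      rintro y hy ⟨e, rfl⟩
      exact hx ⟨((Hh ⟨e, hy⟩).2 : E), (Hh ⟨e, hy⟩).2.2⟩
    · exact hp.isOpenMap.isOpen_range
  intro x
  have huniv : range p = univ := hclopen.eq_univ (range_nonempty p)
  have : x ∈ range p := by rw [huniv]; trivial
  exact this

/-- Local sections through a point. -/
lemma exists_section (hp : IsCoveringMap p) (x₀ : E) :
    ∃ (U : Set X) (V : Set E) (sec : X → E), IsOpen U ∧ IsOpen V ∧ p x₀ ∈ U ∧ x₀ ∈ V ∧
      ContinuousOn sec U ∧ (∀ y ∈ U, p (sec y) = y) ∧ (∀ y ∈ U, sec y ∈ V) ∧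
      (∀ e₁ ∈ V, ∀ e₂ ∈ V, p e₁ = p e₂ → e₁ = e₂) ∧ sec (p x₀) = x₀ := by
  have hdisc : DiscreteTopology (p ⁻¹' {p x₀}) := (hp (p x₀)).1
  have : Nonempty (p ⁻¹' {p x₀}) := ⟨⟨x₀, rfl⟩⟩
  set t := (hp (p x₀)).toTrivialization with ht
  have hx₀U : p x₀ ∈ t.baseSet := (hp (p x₀)).mem_toTrivialization_baseSet
  have hx₀src : x₀ ∈ t.source := t.mem_source.2 hx₀U
  set i₀ := (t x₀).2 with hi₀
  set sec : X → E := fun y => t.toPartialHomeomorph.symm (y, i₀) with hsec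
  have htgt : ∀ y ∈ t.baseSet, ((y, i₀) : X × (p ⁻¹' {p x₀})) ∈ t.target := fun y hy =>
    t.mem_target.2 hy
  refine ⟨t.baseSet, t.source ∩ (fun e' => (t e').2) ⁻¹' {i₀}, sec,
    t.open_baseSet, ?_, hx₀U, ⟨hx₀src, rfl⟩, ?_, ?_, ?_, ?_, ?_⟩
  · exact t.continuousOn_toFun.isOpen_inter_preimage t.open_source
      (continuous_snd.isOpen_preimage _ (isOpen_discrete _))
  · refine t.toPartialHomeomorph.continuousOn_symm.comp
      ((continuous_id.prodMk continuous_const).continuousOn) ?_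
    intro y hy
    exact htgt y hy
  · intro y hy
    exact t.proj_symm_apply (htgt y hy)
  · intro y hy
    constructor
    · exact t.toPartialHomeomorph.map_target (htgt y hy)
    · show (t (t.toPartialHomeomorph.symm (y, i₀))).2 = i₀
      have h := t.apply_symm_apply (htgt y hy)
      have h2 := congrArg Prod.snd h
      exact h2
  · rintro e₁ ⟨hs₁, hi₁⟩ e₂ ⟨hs₂, hi₂⟩ hpe
    have h1 : t e₁ = t e₂ := by
      have hf1 : (t e₁).1 = p e₁ := t.coe_fst hs₁
      have hf2 : (t e₂).1 = p e₂ := t.coe_fst hs₂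
      have : (t e₁).2 = (t e₂).2 := by
        rw [show (t e₁).2 = i₀ from hi₁, show (t e₂).2 = i₀ from hi₂]
      exact Prod.ext (by rw [hf1, hf2, hpe]) this
    exact t.injOn hs₁ hs₂ h1
  · show t.toPartialHomeomorph.symm (p x₀, i₀) = x₀
    exact t.symm_apply_mk_proj hx₀src

lemma lift_trans_pointwise {x y w : X} {γ : Path x y} {γ' : Path y w}
    {e e' e'' : E} (g : Path e e') (g' : Path e' e'')
    (h : ∀ t, p (g t) = γ t) (h' : ∀ t, p (g' t) = γ' t) :
    ∀ t, p ((g.trans g') t) = (γ.trans γ') t := by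
  intro t
  rw [Path.trans_apply, Path.trans_apply]
  split_ifs <;> [exact h _; exact h' _]

lemma lift_symm_pointwise {x y : X} {γ : Path x y} {e e' : E} (g : Path e e')
    (h : ∀ t, p (g t) = γ t) : ∀ t, p (g.symm t) = γ.symm t := fun t => h _

/-- Existence of deck transformations moving `a` to `b`. -/
lemma exists_deck [SimplyConnectedSpace E] (hp : IsCoveringMap p)
    (hloc : ∀ (x : X) (U : Set X), IsOpen U → x ∈ U → ∃ V ∈ 𝓝 x, V ⊆ U ∧ IsPathConnected V)
    (a b : E) (hab : p a = p b) :
    ∃ T : E ≃ₜ E, (∀ x, p (T x) = p x) ∧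
      ∀ (x e'' : E) (P : Path a x) (g : Path b e''),
        (∀ t, p (g t) = p (P t)) → T x = e'' := by
  have hPE : PreconnectedSpace E := inferInstance
  have hcon : ∀ (a b : E), p a = p b → ∃ T : E → E, Continuous T ∧ (∀ x, p (T x) = p x) ∧
      (∀ (x e'' : E) (P : Path a x) (g : Path b e''),
        (∀ t, p (g t) = p (P t)) → T x = e'') := by
    clear hab a b
    intro a b hab
    have hdef : ∀ x : E, ∃ e' : E, ∃ g : Path b e',
        ∀ t, p (g t) = p ((PathConnectedSpace.somePath a x) t) := by
      intro x
      obtain ⟨e', g, hg⟩ :=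
        exists_path_lift hp ((PathConnectedSpace.somePath a x).map hp.continuous) b hab.symm
      exact ⟨e', g, fun t => hg t⟩
    choose T gT hgT using hdef
    have hchar : ∀ (x e'' : E) (P : Path a x) (g : Path b e''),
        (∀ t, p (g t) = p (P t)) → T x = e'' := by
      intro x e'' P g hg
      have hhom : (P.map hp.continuous).Homotopic
          ((PathConnectedSpace.somePath a x).map hp.continuous) :=
        (SimplyConnectedSpace.paths_homotopic P (PathConnectedSpace.somePath a x)).map
          ⟨p, hp.continuous⟩
      exact (lift_end_eq hp hhom g (gT x) (fun t => hg t) (fun t => hgT x t)).symm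
    have hpT : ∀ x, p (T x) = p x := by
      intro x
      have h1 := hgT x 1
      rw [(gT x).target, (PathConnectedSpace.somePath a x).target] at h1
      exact h1
    have hTc : Continuous T := by
      rw [continuous_iff_continuousAt]
      intro x₀
      obtain ⟨U, V, sec, hUo, hVo, hpU, hxV, hsecc, hsecp, hsecV, hVinj, hsecx⟩ :=
        exists_section hp x₀
      obtain ⟨U', V', sec', hU'o, hV'o, hpU', hx'V', hsecc', hsecp', hsecV', hV'inj, hsecx'⟩ :=
        exists_section hp (T x₀)
      have hpU'' : p x₀ ∈ U' := hpT x₀ ▸ hpU'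
      obtain ⟨W, hWn, hWsub, hWpc⟩ := hloc (p x₀) (U ∩ U') (hUo.inter hU'o) ⟨hpU, hpU''⟩
      have hnb : V ∩ p ⁻¹' W ∈ 𝓝 x₀ :=
        Filter.inter_mem (hVo.mem_nhds hxV)
          (hp.continuous.continuousAt.preimage_mem_nhds hWn)
      have heq : ∀ x ∈ V ∩ p ⁻¹' W, T x = sec' (p x) := by
        rintro x ⟨hxV', hxW⟩
        have hj : JoinedIn W (p x₀) (p x) := hWpc.joinedIn _ (mem_of_mem_nhds hWn) _ hxW
        set γv := hj.somePath with hγv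
        have hγvW : ∀ t, γv t ∈ W := hj.somePath_mem
        have hγvU : ∀ t, γv t ∈ U := fun t => (hWsub (hγvW t)).1
        have hγvU' : ∀ t, γv t ∈ U' := fun t => (hWsub (hγvW t)).2
        have hpxU : p x ∈ U := by have h := hγvU 1; rwa [γv.target] at h
        have hsx : sec (p x) = x :=
          hVinj _ (hsecV _ hpxU) _ hxV' (hsecp _ hpxU)
        set Pγ : Path x₀ x := ⟨⟨fun t => sec (γv t),
            hsecc.comp_continuous γv.continuous hγvU⟩,
          by show sec (γv 0) = x₀; rw [γv.source, hsecx],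
          by show sec (γv 1) = x; rw [γv.target, hsx]⟩ with hPγ
        set P : Path a x := (PathConnectedSpace.somePath a x₀).trans Pγ with hP
        have hsrc' : sec' (γv 0) = T x₀ := by
          rw [γv.source, show p x₀ = p (T x₀) from (hpT x₀).symm, hsecx']
        set P'γ : Path (T x₀) (sec' (p x)) := ⟨⟨fun t => sec' (γv t),
            hsecc'.comp_continuous γv.continuous hγvU'⟩,
          hsrc', by show sec' (γv 1) = sec' (p x); rw [γv.target]⟩ with hP'γ
        set g : Path b (sec' (p x)) := (gT x₀).trans P'γ with hg
        have hgl : ∀ t, p (g t) = p (P t) := by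
          intro t
          rw [hg, hP, Path.trans_apply, Path.trans_apply]
          split_ifs with h
          · exact hgT x₀ _
          · show p (sec' (γv _)) = p (sec (γv _))
            rw [hsecp' _ (hγvU' _), hsecp _ (hγvU _)]
        exact hchar x (sec' (p x)) P g hgl
      have hca : ContinuousAt (fun x => sec' (p x)) x₀ :=
        (hsecc'.continuousAt (hU'o.mem_nhds hpU'')).comp hp.continuous.continuousAt
      refine hca.congr ?_
      refine Filter.eventuallyEq_of_mem hnb ?_
      intro x hx
      exact (heq x hx).symm
    exact ⟨T, hTc, hpT, hchar⟩
  obtain ⟨T, hTc, hpT, hchar⟩ := hcon a b hab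
  obtain ⟨T', hT'c, hpT', hchar'⟩ := hcon b a hab.symm
  have hTa : T a = b := hchar a b (Path.refl a) (Path.refl b)
    (fun t => by simp only [Path.refl_apply]; exact hab.symm)
  have hT'b : T' b = a := hchar' b a (Path.refl b) (Path.refl a)
    (fun t => by simp only [Path.refl_apply]; exact hab)
  have hleft : T' ∘ T = id := by
    refine hp.eq_of_comp_eq (hT'c.comp hTc) continuous_id ?_ a ?_
    · funext x
      show p (T' (T x)) = p x
      rw [hpT', hpT]
    · show T' (T a) = a
      rw [hTa, hT'b]
  have hright : T ∘ T' = id := by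
    refine hp.eq_of_comp_eq (hTc.comp hT'c) continuous_id ?_ b ?_
    · funext x
      show p (T (T' x)) = p x
      rw [hpT, hpT']
    · show T (T' b) = b
      rw [hT'b, hTa]
  exact ⟨⟨⟨T, T', fun x => congrFun hleft x, fun x => congrFun hright x⟩, hTc, hT'c⟩, hpT, hchar⟩

/-- Local path-connectedness for charted spaces on Euclidean plane. -/
lemma charted_loc_path {N : Type*} [TopologicalSpace N]
    [ChartedSpace (EuclideanSpace ℝ (Fin 2)) N] (x : N) (U : Set N)
    (hU : IsOpen U) (hx : x ∈ U) : ∃ V ∈ 𝓝 x, V ⊆ U ∧ IsPathConnected V := by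
  set φ := chartAt (EuclideanSpace ℝ (Fin 2)) x with hφ
  have hxs : x ∈ φ.source := mem_chart_source _ x
  set W : Set N := U ∩ φ.source with hW
  have hWo : IsOpen W := hU.inter φ.open_source
  have hxW : x ∈ W := ⟨hx, hxs⟩
  have himg : IsOpen (φ '' W) := φ.isOpen_image_of_subset_source hWo inter_subset_right
  obtain ⟨V', hV'⟩ := (path_connected_basis (φ x)).mem_iff.mp
    (himg.mem_nhds (mem_image_of_mem _ hxW))
  obtain ⟨⟨hV'n, hV'pc⟩, hV'sub⟩ := hV'
  have hV'tgt : V' ⊆ φ.target := by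
    refine subset_trans hV'sub ?_
    rw [← φ.image_source_eq_target]
    exact image_mono inter_subset_right
  refine ⟨φ.symm '' V', ?_, ?_, ?_⟩
  · have hpre : φ.source ∩ φ ⁻¹' V' ∈ 𝓝 x :=
      Filter.inter_mem (φ.open_source.mem_nhds hxs)
        ((φ.continuousAt hxs).preimage_mem_nhds hV'n)
    refine Filter.mem_of_superset hpre ?_
    rintro w ⟨hws, hwv⟩
    exact ⟨φ w, hwv, φ.left_inv hws⟩
  · rintro w ⟨v, hv, rfl⟩
    obtain ⟨u, huW, hu⟩ := hV'sub hv
    rw [← hu, φ.left_inv huW.2]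
    exact huW.1
  · exact hV'pc.image' (φ.continuousOn_symm.mono hV'tgt)

attribute [local instance] Path.Homotopic.setoid

/-- Commutation in the fundamental groupoid from the two adaptedness relations. -/
lemma conj_comm {Z : Type*} [TopologicalSpace Z] {z w : Z} (α β : Path z w)
    (q : Path w w) (γ : Path z z)
    (hA : (α.trans (q.trans α.symm)).Homotopic γ)
    (hB : (β.trans (q.trans β.symm)).Homotopic γ) :
    ((α.symm.trans β).trans q).Homotopic (q.trans (α.symm.trans β)) := by
  let zz : FundamentalGroupoid Z := ⟨z⟩
  let ww : FundamentalGroupoid Z := ⟨w⟩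
  let a : zz ⟶ ww := ⟦α⟧
  let b : zz ⟶ ww := ⟦β⟧
  let qq : ww ⟶ ww := ⟦q⟧
  have hA' : a ≫ qq ≫ CategoryTheory.Groupoid.inv a = (⟦γ⟧ : zz ⟶ zz) := by
    have h1 : (⟦α.trans (q.trans α.symm)⟧ : Path.Homotopic.Quotient z z) = ⟦γ⟧ :=
      Quotient.sound hA
    show Path.Homotopic.Quotient.trans (Path.Homotopic.Quotient.mk α)
      (Path.Homotopic.Quotient.trans (Path.Homotopic.Quotient.mk q)
        (Path.Homotopic.Quotient.mk α.symm)) = _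
    rw [← Path.Homotopic.Quotient.mk_trans, ← Path.Homotopic.Quotient.mk_trans]
    exact h1
  have hB' : b ≫ qq ≫ CategoryTheory.Groupoid.inv b = (⟦γ⟧ : zz ⟶ zz) := by
    have h1 : (⟦β.trans (q.trans β.symm)⟧ : Path.Homotopic.Quotient z z) = ⟦γ⟧ :=
      Quotient.sound hB
    show Path.Homotopic.Quotient.trans (Path.Homotopic.Quotient.mk β)
      (Path.Homotopic.Quotient.trans (Path.Homotopic.Quotient.mk q)
        (Path.Homotopic.Quotient.mk β.symm)) = _
    rw [← Path.Homotopic.Quotient.mk_trans, ← Path.Homotopic.Quotient.mk_trans]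
    exact h1
  have h1 : a ≫ qq ≫ CategoryTheory.Groupoid.inv a
      = b ≫ qq ≫ CategoryTheory.Groupoid.inv b := by rw [hA', hB']
  have h2 : b ≫ qq = a ≫ qq ≫ CategoryTheory.Groupoid.inv a ≫ b := by
    calc b ≫ qq = (b ≫ qq ≫ CategoryTheory.Groupoid.inv b) ≫ b := by simp
      _ = (a ≫ qq ≫ CategoryTheory.Groupoid.inv a) ≫ b := by rw [h1]
      _ = a ≫ qq ≫ CategoryTheory.Groupoid.inv a ≫ b := by simp
  have hgoal : (CategoryTheory.Groupoid.inv a ≫ b) ≫ qq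
      = qq ≫ (CategoryTheory.Groupoid.inv a ≫ b) := by
    calc (CategoryTheory.Groupoid.inv a ≫ b) ≫ qq
        = CategoryTheory.Groupoid.inv a ≫ (b ≫ qq) := by simp
      _ = CategoryTheory.Groupoid.inv a ≫ (a ≫ qq ≫ CategoryTheory.Groupoid.inv a ≫ b) := by
          rw [h2]
      _ = qq ≫ (CategoryTheory.Groupoid.inv a ≫ b) := by simp
  have lhs : (⟦(α.symm.trans β).trans q⟧ : ww ⟶ ww)
      = (CategoryTheory.Groupoid.inv a ≫ b) ≫ qq := by
    show _ = Path.Homotopic.Quotient.trans (Path.Homotopic.Quotient.trans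
      (Path.Homotopic.Quotient.mk α.symm) (Path.Homotopic.Quotient.mk β))
      (Path.Homotopic.Quotient.mk q)
    rw [← Path.Homotopic.Quotient.mk_trans, ← Path.Homotopic.Quotient.mk_trans]
    rfl
  have rhs : (⟦q.trans (α.symm.trans β)⟧ : ww ⟶ ww)
      = qq ≫ (CategoryTheory.Groupoid.inv a ≫ b) := by
    show _ = Path.Homotopic.Quotient.trans (Path.Homotopic.Quotient.mk q)
      (Path.Homotopic.Quotient.trans (Path.Homotopic.Quotient.mk α.symm)
        (Path.Homotopic.Quotient.mk β))
    rw [← Path.Homotopic.Quotient.mk_trans, ← Path.Homotopic.Quotient.mk_trans]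
    rfl
  exact Quotient.exact (lhs.trans (hgoal.trans rhs.symm))

end AdaptedAux

open AdaptedAux in
/-- If the deck group of the universal cover has trivial center and F
admits a lift commuting with all deck transformations, then any two adapted paths
from z to F(z) are homotopic rel endpoints. -/
theorem adapted_paths_homotopic
    {N Nh : Type*} [TopologicalSpace N] [TopologicalSpace Nh]
    [T2Space N] [SecondCountableTopology N] [ConnectedSpace N]
    [ChartedSpace (EuclideanSpace ℝ (Fin 2)) N]
    (π : Nh → N) (hπ : IsCoveringMap π) [SimplyConnectedSpace Nh]
    -- the deck transformation group has trivial center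
    (hcenter : ∀ T : Nh ≃ₜ Nh, (∀ x, π (T x) = π x) →
      (∀ S : Nh ≃ₜ Nh, (∀ x, π (S x) = π x) → ∀ x, T (S x) = S (T x)) →
      T = Homeomorph.refl Nh)
    (F : N ≃ₜ N)
    -- F admits a lift commuting with all deck transformations
    (Fh : Nh ≃ₜ Nh) (hlift : ∀ x, π (Fh x) = F (π x))
    (hcomm : ∀ T : Nh ≃ₜ Nh, (∀ x, π (T x) = π x) → ∀ x, Fh (T x) = T (Fh x))
    (z : N) (α β : Path z (F z))
    (hα : ∀ γ : Path z z, (α.trans ((γ.map F.continuous).trans α.symm)).Homotopic γ)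
    (hβ : ∀ γ : Path z z, (β.trans ((γ.map F.continuous).trans β.symm)).Homotopic γ) :
    α.Homotopic β := by
  have hNE : Nonempty Nh := inferInstance
  obtain ⟨zh, hzh⟩ := cov_surjective hπ z
  obtain ⟨a, ga, hga⟩ := exists_path_lift hπ α zh hzh
  obtain ⟨b, gb, hgb⟩ := exists_path_lift hπ β zh hzh
  suffices hab : a = b by
    exact homotopic_of_lifts hπ α β ga gb hga hgb hab
  have hpa : π a = F z := by
    have h := hga 1
    rwa [ga.target, α.target] at h
  have hpb : π b = F z := by
    have h := hgb 1
    rwa [gb.target, β.target] at h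
  obtain ⟨T, hTdeck, hTchar⟩ := exists_deck hπ
    (fun x U hU hx => charted_loc_path x U hU hx) a b (hpa.trans hpb.symm)
  have hTa : T a = b := hTchar a b (Path.refl a) (Path.refl b)
    (fun t => by simp only [Path.refl_apply]; rw [hpa, hpb])
  have hTcomm : ∀ S : Nh ≃ₜ Nh, (∀ x, π (S x) = π x) → ∀ x, T (S x) = S (T x) := by
    intro S hS
    have hkey : T (S a) = S (T a) := by
      rw [hTa]
      set Psa := PathConnectedSpace.somePath a (S a) with hPsa
      obtain ⟨e₁, g₁, hg₁⟩ := exists_path_lift hπ (Psa.map hπ.continuous) b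
        (hpb.trans hpa.symm)
      have hTSa : T (S a) = e₁ := hTchar (S a) e₁ Psa g₁ (fun t => hg₁ t)
      set cc : Path (F z) (F z) := α.symm.trans β with hcc
      have hq2 : F z = π (S a) := ((hS a).trans hpa).symm
      set q'' : Path (F z) (F z) := (Psa.map hπ.continuous).cast hpa.symm hq2 with hq''
      have hzf : z = F.symm (F z) := (F.symm_apply_apply z).symm
      set γγ : Path z z := ((q''.map F.symm.continuous).cast hzf hzf) with hγγ
      have hmapq : γγ.map F.continuous = q'' := by
        apply Path.ext
        funext t
        show F (γγ t) = q'' t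
        have h1 : γγ t = F.symm (q'' t) := by
          rw [hγγ]
          show ((q''.map F.symm.continuous).cast hzf hzf) t = _
          rw [Path.cast_coe]
          rfl
        rw [h1]
        exact F.apply_symm_apply _
      have hAq := hα γγ
      have hBq := hβ γγ
      rw [hmapq] at hAq hBq
      have hKEY := conj_comm α β q'' γγ hAq hBq
      set gc : Path a b := ga.symm.trans gb with hgc
      have hgcl : ∀ t, π (gc t) = cc t :=
        lift_trans_pointwise ga.symm gb (lift_symm_pointwise ga hga) hgb
      have hq''l : ∀ t, π (Psa t) = q'' t := by
        intro t
        rw [hq'']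
        show π (Psa t) = ((Psa.map hπ.continuous).cast hpa.symm hq2) t
        rw [Path.cast_coe]
        rfl
      have hg₁l : ∀ t, π (g₁ t) = q'' t := fun t => (hg₁ t).trans (hq''l t)
      have hG₁ : ∀ t, π ((gc.trans g₁) t) = (cc.trans q'') t :=
        lift_trans_pointwise gc g₁ hgcl hg₁l
      have hgcS : ∀ t, π ((gc.map S.continuous) t) = cc t := by
        intro t
        show π (S (gc t)) = cc t
        rw [hS, hgcl t]
      have hG₂ : ∀ t, π ((Psa.trans (gc.map S.continuous)) t) = (q''.trans cc) t :=
        lift_trans_pointwise Psa (gc.map S.continuous) hq''l hgcS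
      have he₁ : e₁ = S b :=
        lift_end_eq hπ hKEY (gc.trans g₁) (Psa.trans (gc.map S.continuous)) hG₁ hG₂
      rw [hTSa, he₁]
    have hPC : PreconnectedSpace Nh := inferInstance
    have hfun := hπ.eq_of_comp_eq (A := Nh) (T.continuous.comp S.continuous)
      (S.continuous.comp T.continuous) ?_ a hkey
    · intro x
      exact congrFun hfun x
    · funext x
      show π (T (S x)) = π (S (T x))
      rw [hTdeck, hS, hS, hTdeck]
  have hT : T = Homeomorph.refl Nh := hcenter T hTdeck hTcomm
  rw [hT] at hTa
  simpa using hTa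
end

section
/- Let N be an open subset of a surface M, D ⊂ N an open topological disk with closure contained in N, and y, y' two points of D. Let α and β be two paths in N \ cl(D) with the same origin z and the same endpoint z'. If α and β are homotopic rel endpoints in N \ {y'}, then they are homotopic rel endpoints in N \ {y}. -/
section Aux


open Metric

variable {E : Type*} [NormedAddCommGroup E] [NormedSpace ℝ E] [CompleteSpace E]

lemma pushFun_lip (v : E) {R : ℝ} (hR : 0 < R) (x y : E) :
    ‖max 0 (1 - ‖x‖ / R) • v - max 0 (1 - ‖y‖ / R) • v‖ ≤ (‖v‖ / R) * ‖x - y‖ := by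
  rw [← sub_smul, norm_smul]
  have h1 : |max 0 (1 - ‖x‖ / R) - max 0 (1 - ‖y‖ / R)| ≤ |(1 - ‖x‖ / R) - (1 - ‖y‖ / R)| := by
    simpa [max_comm] using abs_max_sub_max_le_abs (1 - ‖x‖ / R) (1 - ‖y‖ / R) 0
  have h2 : |(1 - ‖x‖ / R) - (1 - ‖y‖ / R)| = |‖y‖ - ‖x‖| / R := by
    have : (1 - ‖x‖ / R) - (1 - ‖y‖ / R) = (‖y‖ - ‖x‖) / R := by ring
    rw [this, abs_div, abs_of_pos hR]
  have h3 : |‖y‖ - ‖x‖| ≤ ‖x - y‖ := by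
    simpa [norm_sub_rev, abs_sub_comm] using abs_norm_sub_norm_le x y
  calc |max 0 (1 - ‖x‖ / R) - max 0 (1 - ‖y‖ / R)| * ‖v‖
      ≤ (‖x - y‖ / R) * ‖v‖ := by
        apply mul_le_mul_of_nonneg_right _ (norm_nonneg v)
        exact h1.trans (h2.le.trans (div_le_div_of_nonneg_right h3 hR.le))
    _ = (‖v‖ / R) * ‖x - y‖ := by ring

lemma exists_push (v : E) {R : ℝ} (hR : 0 < R) (hv : ‖v‖ < R) :
    ∃ g : E ≃ₜ E, g 0 = v ∧ ∀ x : E, R ≤ ‖x‖ → g x = x := by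
  set φ : E → ℝ := fun x => max 0 (1 - ‖x‖ / R) with hφ
  set g : E → E := fun x => x + φ x • v with hg
  have hc : ‖v‖ / R < 1 := (div_lt_one hR).mpr hv
  have hc0 : 0 ≤ ‖v‖ / R := by positivity
  -- injectivity
  have hinj : Function.Injective g := by
    intro x y hxy
    have hxy' : x + φ x • v = y + φ y • v := hxy
    have h1 : x - y = φ y • v - φ x • v :=
      sub_eq_sub_iff_add_eq_add.mpr (hxy'.trans (add_comm _ _))
    have h2 : ‖x - y‖ ≤ (‖v‖ / R) * ‖x - y‖ := by
      calc ‖x - y‖ = ‖φ x • v - φ y • v‖ := by rw [h1, norm_sub_rev]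
        _ ≤ (‖v‖ / R) * ‖x - y‖ := pushFun_lip v hR x y
    by_contra hne
    have : 0 < ‖x - y‖ := by
      rw [norm_pos_iff, sub_ne_zero]; exact fun h => hne (by rw [h])
    nlinarith
  -- surjectivity via Banach fixed point
  have hsurj : Function.Surjective g := by
    intro w
    set F : E → E := fun x => w - φ x • v with hF
    have hlip : LipschitzWith (‖v‖ / R).toNNReal F := by
      rw [lipschitzWith_iff_dist_le_mul]
      intro x y
      rw [dist_eq_norm, dist_eq_norm, Real.coe_toNNReal _ hc0]
      have h : (w - φ x • v) - (w - φ y • v) = φ y • v - φ x • v := by module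
      show ‖(w - φ x • v) - (w - φ y • v)‖ ≤ ‖v‖ / R * ‖x - y‖
      rw [h, norm_sub_rev]
      exact pushFun_lip v hR x y
    have hcontr : ContractingWith (‖v‖ / R).toNNReal F :=
      ⟨by simpa [← NNReal.coe_lt_coe, Real.coe_toNNReal _ hc0] using hc, hlip⟩
    have : Nonempty E := ⟨0⟩
    refine ⟨hcontr.fixedPoint F, ?_⟩
    have hfix := hcontr.fixedPoint_isFixedPt
    simp only [Function.IsFixedPt, hF] at hfix
    show hcontr.fixedPoint F + φ (hcontr.fixedPoint F) • v = w
    exact (sub_eq_iff_eq_add.mp hfix).symm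
  have hbij : Function.Bijective g := ⟨hinj, hsurj⟩
  have hcont : Continuous g := by
    apply continuous_id.add (Continuous.smul _ continuous_const)
    exact continuous_const.max ((continuous_const.sub (continuous_norm.div_const R)))
  -- inverse Lipschitz
  have hinvlip : LipschitzWith ((1 - ‖v‖ / R)⁻¹).toNNReal (Equiv.ofBijective g hbij).symm := by
    rw [lipschitzWith_iff_dist_le_mul]
    intro u w
    set x := (Equiv.ofBijective g hbij).symm u with hx
    set y := (Equiv.ofBijective g hbij).symm w with hy
    have hgx : g x = u := (Equiv.ofBijective g hbij).apply_symm_apply u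
    have hgy : g y = w := (Equiv.ofBijective g hbij).apply_symm_apply w
    have key : ‖x - y‖ ≤ ‖g x - g y‖ + (‖v‖ / R) * ‖x - y‖ := by
      have : x - y = (g x - g y) + (φ y • v - φ x • v) := by simp only [hg]; module
      calc ‖x - y‖ = ‖(g x - g y) + (φ y • v - φ x • v)‖ := by rw [← this]
        _ ≤ ‖g x - g y‖ + ‖φ y • v - φ x • v‖ := norm_add_le _ _
        _ ≤ ‖g x - g y‖ + (‖v‖ / R) * ‖x - y‖ := by
            have := pushFun_lip v hR y x
            rw [norm_sub_rev y x] at this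
            linarith
    have h1c : 0 < 1 - ‖v‖ / R := by linarith
    rw [dist_eq_norm, dist_eq_norm, hgx, hgy] at *
    rw [Real.coe_toNNReal _ (by positivity : (0:ℝ) ≤ (1 - ‖v‖ / R)⁻¹)]
    rw [inv_mul_eq_div, le_div_iff₀ h1c]
    nlinarith [norm_nonneg (x - y), norm_nonneg (u - w)]
  refine ⟨Homeomorph.mk (Equiv.ofBijective g hbij) hcont hinvlip.continuous, ?_, ?_⟩
  · show g 0 = v
    simp [hg, hφ]
  · intro x hx
    show g x = x
    have : φ x = 0 := by
      simp only [hφ]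
      rw [max_eq_left]
      rw [sub_nonpos, le_div_iff₀ hR, one_mul]; exact hx
    simp [hg, this]

lemma symm_fix_outside (g : E ≃ₜ E) {r : ℝ} (h : ∀ x : E, r ≤ ‖x‖ → g x = x) :
    ∀ x : E, r ≤ ‖x‖ → g.symm x = x := by
  intro x hx
  conv_lhs => rw [← h x hx]
  exact g.symm_apply_apply x

lemma exists_move (a b : E) (ha : ‖a‖ < 1) (hb : ‖b‖ < 1) :
    ∃ (g : E ≃ₜ E) (r : ℝ), r < 1 ∧ g a = b ∧ ∀ x : E, r ≤ ‖x‖ → g x = x := by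
  set R : ℝ := (max ‖a‖ ‖b‖ + 1) / 2 with hRdef
  have hmax1 : max ‖a‖ ‖b‖ < 1 := max_lt ha hb
  have hmax0 : 0 ≤ max ‖a‖ ‖b‖ := le_max_of_le_left (norm_nonneg a)
  have hR0 : 0 < R := by rw [hRdef]; linarith
  have hR1 : R < 1 := by rw [hRdef]; linarith
  have ha' : ‖a‖ < R := by have := le_max_left ‖a‖ ‖b‖; rw [hRdef]; linarith
  have hb' : ‖b‖ < R := by have := le_max_right ‖a‖ ‖b‖; rw [hRdef]; linarith
  obtain ⟨g₁, hg₁0, hg₁⟩ := exists_push a hR0 ha'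
  obtain ⟨g₂, hg₂0, hg₂⟩ := exists_push b hR0 hb'
  refine ⟨g₁.symm.trans g₂, R, hR1, ?_, ?_⟩
  · have h0 : g₁.symm a = 0 := by rw [← hg₁0, Homeomorph.symm_apply_apply]
    simp [Homeomorph.trans_apply, h0, hg₂0]
  · intro x hx
    simp [Homeomorph.trans_apply, symm_fix_outside g₁ hg₁ x hx, hg₂ x hx]

lemma norm_lt_of_fix (g : E ≃ₜ E) {r : ℝ} (h : ∀ x : E, r ≤ ‖x‖ → g x = x)
    {x : E} (hx : ‖x‖ < r) : ‖g x‖ < r := by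
  by_contra hge
  push_neg at hge
  have h1 : g (g x) = g x := h (g x) hge
  have h2 : g x = x := g.injective h1
  rw [h2] at hge
  linarith

lemma norm_lt_one_of_fix (g : E ≃ₜ E) {r : ℝ} (hr : r < 1)
    (h : ∀ x : E, r ≤ ‖x‖ → g x = x) {x : E} (hx : ‖x‖ < 1) : ‖g x‖ < 1 := by
  rcases lt_or_ge ‖x‖ r with h' | h'
  · exact (norm_lt_of_fix g h h').trans hr
  · rw [h x h']; exact hx

open Metric in
lemma exists_displacing_map {M : Type*} [TopologicalSpace M] [T2Space M]
    (D : Set M) (hD : IsOpen D)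
    (e : ↥D ≃ₜ ↥(Metric.ball (0 : EuclideanSpace ℝ (Fin 2)) 1))
    (y y' : M) (hy : y ∈ D) (hy' : y' ∈ D) :
    ∃ f : M → M, Continuous f ∧ Function.Injective f ∧ f y' = y ∧
      (∀ x ∈ D, f x ∈ D) ∧ (∀ x ∉ D, f x = x) := by
  classical
  set E := EuclideanSpace ℝ (Fin 2)
  set a : E := ↑(e ⟨y', hy'⟩) with hadef
  set b : E := ↑(e ⟨y, hy⟩) with hbdef
  have ha : ‖a‖ < 1 := mem_ball_zero_iff.mp (e ⟨y', hy'⟩).2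
  have hb : ‖b‖ < 1 := mem_ball_zero_iff.mp (e ⟨y, hy⟩).2
  obtain ⟨g, r, hr1, hgab, hfix⟩ := exists_move a b ha hb
  have hball : ∀ d : ↥D, g ↑(e d) ∈ Metric.ball (0 : E) 1 := fun d =>
    mem_ball_zero_iff.mpr (norm_lt_one_of_fix g hr1 hfix (mem_ball_zero_iff.mp (e d).2))
  set fD : ↥D → M := fun d => ↑(e.symm ⟨g ↑(e d), hball d⟩) with hfD
  have hfDcont : Continuous fD := by
    apply continuous_subtype_val.comp
    apply e.symm.continuous.comp
    exact Continuous.subtype_mk (g.continuous.comp (continuous_subtype_val.comp e.continuous)) _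
  have hfDmem : ∀ d : ↥D, fD d ∈ D := fun d => (e.symm ⟨g ↑(e d), hball d⟩).2
  set f : M → M := fun x => if h : x ∈ D then fD ⟨x, h⟩ else x with hf
  -- the compact support
  set S₀ : Set ↥(Metric.ball (0 : E) 1) := Subtype.val ⁻¹' Metric.closedBall 0 r with hS₀
  have hS₀c : IsCompact S₀ := by
    rw [Topology.IsEmbedding.subtypeVal.isCompact_iff]
    have himg : Subtype.val '' S₀ = Metric.closedBall (0 : E) r := by
      ext z
      constructor
      · rintro ⟨w, hw, rfl⟩; exact hw
      · intro hz
        have hzball : z ∈ Metric.ball (0 : E) 1 :=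
          mem_ball_zero_iff.mpr (lt_of_le_of_lt (mem_closedBall_zero_iff.mp hz) hr1)
        exact ⟨⟨z, hzball⟩, hz, rfl⟩
    rw [himg]
    exact isCompact_closedBall 0 r
  set K : Set M := Subtype.val '' (e.symm '' S₀) with hK
  have hKc : IsCompact K := ((hS₀c.image e.symm.continuous).image continuous_subtype_val)
  have hKD : K ⊆ D := by
    rintro x ⟨d, _, rfl⟩; exact d.2
  have hfixM : ∀ x ∉ K, f x = x := by
    intro x hxK
    by_cases h : x ∈ D
    · have hnorm : r ≤ ‖(↑(e ⟨x, h⟩) : E)‖ := by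
        by_contra hlt
        push_neg at hlt
        apply hxK
        refine ⟨e.symm (e ⟨x, h⟩), ⟨e ⟨x, h⟩, ?_, rfl⟩, ?_⟩
        · exact mem_closedBall_zero_iff.mpr hlt.le
        · rw [e.symm_apply_apply]
      have hgz : g ↑(e ⟨x, h⟩) = ↑(e ⟨x, h⟩) := hfix _ hnorm
      simp only [hf, dif_pos h, hfD]
      have : (⟨g ↑(e ⟨x, h⟩), hball ⟨x, h⟩⟩ : ↥(Metric.ball (0 : E) 1)) = e ⟨x, h⟩ :=
        Subtype.ext hgz
      rw [this, e.symm_apply_apply]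
    · simp only [hf, dif_neg h]
  have hKclosed : IsClosed K := hKc.isClosed
  have hfcont : Continuous f := by
    rw [continuous_iff_continuousAt]
    intro x
    by_cases h : x ∈ D
    · have hcOn : ContinuousOn f D := by
        rw [continuousOn_iff_continuous_restrict]
        have : D.domRestrict f = fD := by
          funext d
          simp only [Set.domRestrict_apply, hf, dif_pos d.2, Subtype.coe_eta]
        rw [this]; exact hfDcont
      exact hcOn.continuousAt (hD.mem_nhds h)
    · have hxK : x ∉ K := fun hxK => h (hKD hxK)
      have heq : f =ᶠ[nhds x] id := by
        filter_upwards [hKclosed.isOpen_compl.mem_nhds hxK] with z hz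
        exact hfixM z hz
      exact (continuousAt_id).congr heq.symm
  have hinj : Function.Injective f := by
    intro u w huw
    by_cases hu : u ∈ D <;> by_cases hw : w ∈ D
    · simp only [hf, dif_pos hu, dif_pos hw, hfD] at huw
      have h1 := e.symm.injective (Subtype.coe_injective huw)
      have h2 : g ↑(e ⟨u, hu⟩) = g ↑(e ⟨w, hw⟩) := congrArg Subtype.val h1
      have h3 := e.injective (Subtype.ext (g.injective h2))
      exact congrArg Subtype.val h3
    · exfalso
      have h1 : f u ∈ D := by simp only [hf, dif_pos hu]; exact hfDmem _
      have h2 : f w = w := by simp only [hf, dif_neg hw]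
      rw [huw, h2] at h1; exact hw h1
    · exfalso
      have h1 : f w ∈ D := by simp only [hf, dif_pos hw]; exact hfDmem _
      have h2 : f u = u := by simp only [hf, dif_neg hu]
      rw [← huw, h2] at h1; exact hu h1
    · simp only [hf, dif_neg hu, dif_neg hw] at huw; exact huw
  refine ⟨f, hfcont, hinj, ?_, ?_, ?_⟩
  · simp only [hf, dif_pos hy', hfD]
    have : (⟨g a, hball ⟨y', hy'⟩⟩ : ↥(Metric.ball (0 : E) 1)) = e ⟨y, hy⟩ :=
      Subtype.ext (hgab.trans rfl)
    rw [this, e.symm_apply_apply]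
  · intro x hx
    simp only [hf, dif_pos hx]; exact hfDmem _
  · intro x hx
    simp only [hf, dif_neg hx]

end Aux


/-- Two paths `α`, `β` with the same endpoints are homotopic rel endpoints within
the subset `S`. -/
def PathHomotopicIn {M : Type*} [TopologicalSpace M]
    (α β : C(unitInterval, M)) (S : Set M) : Prop :=
  ∃ H : C(unitInterval × unitInterval, M),
    (∀ t, H (0, t) = α t) ∧
    (∀ t, H (1, t) = β t) ∧
    (∀ s, H (s, 0) = α 0) ∧
    (∀ s, H (s, 1) = α 1) ∧
    (∀ p, H p ∈ S)

/-- Alexander-type lemma: if two paths avoiding the closure of an open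
disk D ⊆ N are homotopic rel endpoints in N \ {y'}, where y' ∈ D, then they are
homotopic rel endpoints in N \ {y} for any other point y ∈ D. -/
theorem homotopic_avoiding_point_of_disk
    {M : Type*} [TopologicalSpace M]
    [T2Space M] [SecondCountableTopology M]
    [ChartedSpace (EuclideanSpace ℝ (Fin 2)) M]
    (N : Set M) (hN : IsOpen N)
    (D : Set M) (hD : IsOpen D)
    (hdisk : Nonempty (↥D ≃ₜ ↥(Metric.ball (0 : EuclideanSpace ℝ (Fin 2)) 1)))
    (hDN : closure D ⊆ N)
    (y y' : M) (hy : y ∈ D) (hy' : y' ∈ D)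
    (α β : C(unitInterval, M))
    (hα : ∀ t, α t ∈ N \ closure D) (hβ : ∀ t, β t ∈ N \ closure D)
    (h0 : α 0 = β 0) (h1 : α 1 = β 1)
    (hhom : PathHomotopicIn α β (N \ {y'})) :
    PathHomotopicIn α β (N \ {y}) := by
  obtain ⟨e⟩ := hdisk
  obtain ⟨f, hfc, hfinj, hfy, hfD, hfid⟩ := exists_displacing_map D hD e y y' hy hy'
  obtain ⟨H, H0, H1, Hs0, Hs1, Hmem⟩ := hhom
  have hαD : ∀ t, α t ∉ D := fun t ht => (hα t).2 (subset_closure ht)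
  have hβD : ∀ t, β t ∉ D := fun t ht => (hβ t).2 (subset_closure ht)
  refine ⟨⟨fun p => f (H p), hfc.comp H.continuous⟩, ?_, ?_, ?_, ?_, ?_⟩
  · intro t
    simp only [ContinuousMap.coe_mk]
    rw [H0 t]; exact hfid _ (hαD t)
  · intro t
    simp only [ContinuousMap.coe_mk]
    rw [H1 t]; exact hfid _ (hβD t)
  · intro s
    simp only [ContinuousMap.coe_mk]
    rw [Hs0 s]; exact hfid _ (hαD 0)
  · intro s
    simp only [ContinuousMap.coe_mk]
    rw [Hs1 s]; exact hfid _ (hαD 1)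
  · intro p
    simp only [ContinuousMap.coe_mk]
    have hm := Hmem p
    by_cases hp : H p ∈ D
    · refine ⟨hDN (subset_closure (hfD _ hp)), ?_⟩
      intro hfmem
      have hfeq : f (H p) = f y' := by
        rw [hfy]; exact Set.mem_singleton_iff.mp hfmem
      exact hm.2 (Set.mem_singleton_iff.mpr (hfinj hfeq))
    · rw [hfid _ hp]
      exact ⟨hm.1, fun h => hp (Set.mem_singleton_iff.mp h ▸ hy)⟩
end

section
/- Let D_N be a closed topological disk in a surface N, and let γ and γ' be two paths in the interior of D_N with the same origin x and the same endpoint x'. Then there exists an isotopy J = (G_t)_{t∈[0,1]} from the identity of N to itself, supported in D_N, such that G_t(γ(t)) = γ'(t) for all t ∈ [0,1], and J is homotopic rel endpoints to the constant identity isotopy through isotopies that are the identity outside D_N. -/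
open Complex Set Metric

noncomputable section

namespace DiskProof

/-- one discrete winding increment -/
noncomputable def wterm (d : ℕ) (x : ℝ → ℂ) (j : ℕ) : ℝ :=
  Complex.arg (x (((j : ℝ) + 1) / d) / x ((j : ℝ) / d))

/-- discrete winding sum -/
noncomputable def wsum (n : ℕ) (x : ℝ → ℂ) : ℝ :=
  ∑ j ∈ Finset.range n, wterm n x j

lemma exp_arg_mul_I {u : ℂ} (hu : u ≠ 0) :
    Complex.exp (u.arg * I) = u / (‖u‖ : ℂ) := by
  have h := Complex.norm_mul_exp_arg_mul_I u
  have habs : (‖u‖ : ℂ) ≠ 0 := by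
    simpa using hu
  field_simp
  rw [mul_comm] at h
  exact h

lemma exp_wpartial (d : ℕ) (x : ℝ → ℂ) :
    ∀ c : ℕ, (∀ j : ℕ, j ≤ c → x ((j : ℝ) / d) ≠ 0) →
    Complex.exp ((∑ j ∈ Finset.range c, wterm d x j : ℝ) * I)
      = (x ((c : ℝ) / d) / x 0) / (‖x ((c : ℝ) / d) / x 0‖ : ℂ) := by
  intro c
  induction c with
  | zero =>
    intro h
    have h0 : x 0 ≠ 0 := by have := h 0 le_rfl; simpa using this
    simp [div_self h0, div_self (by simpa using h0 : (‖x 0‖ : ℂ) ≠ 0)]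
  | succ c ih =>
    intro h
    have h0 : x 0 ≠ 0 := by
      have := h 0 (by omega)
      simpa using this
    have hc : x ((c : ℝ) / d) ≠ 0 := h c (by omega)
    have hc1 : x (((c : ℝ) + 1) / d) ≠ 0 := by
      have := h (c + 1) le_rfl
      push_cast at this
      exact this
    set a := x ((c : ℝ) / d) with ha
    set b := x (((c : ℝ) + 1) / d) with hb
    have hcast : ((c + 1 : ℕ) : ℝ) = (c : ℝ) + 1 := by push_cast; ring
    rw [Finset.sum_range_succ, Complex.ofReal_add, add_mul, Complex.exp_add,
      ih (fun j hj => h j (by omega)), hcast]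
    rw [wterm, exp_arg_mul_I (div_ne_zero hc1 hc)]
    rw [div_mul_div_comm]
    have hnum : a / x 0 * (b / a) = b / x 0 := by
      field_simp
    have habs : (‖a / x 0‖ : ℂ) * (‖b / a‖ : ℂ)
        = (‖b / x 0‖ : ℂ) := by
      rw [← Complex.ofReal_mul, ← norm_mul, hnum]
    rw [hnum, habs]

lemma wsum_int {n : ℕ} (hn : 0 < n) (x : ℝ → ℂ)
    (hnz : ∀ j : ℕ, j ≤ n → x ((j : ℝ) / n) ≠ 0) (hloop : x 1 = x 0) :
    ∃ k : ℤ, wsum n x = 2 * Real.pi * k := by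
  have h0 : x 0 ≠ 0 := by have := hnz 0 (by omega); simpa using this
  have hnn : ((n : ℝ) / n) = 1 := div_self (by positivity)
  have h := exp_wpartial n x n hnz
  rw [hnn, hloop] at h
  rw [div_self h0] at h
  simp only [norm_one, Complex.ofReal_one, div_one] at h
  rw [Complex.exp_eq_one_iff] at h
  obtain ⟨k, hk⟩ := h
  refine ⟨k, ?_⟩
  have hI : ((wsum n x : ℝ) : ℂ) = ((2 * Real.pi * k : ℝ) : ℂ) := by
    have : ((k : ℂ) * (2 * (Real.pi : ℂ) * I)) = ((2 * Real.pi * k : ℝ) : ℂ) * I := by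
      push_cast; ring
    rw [this] at hk
    exact mul_right_cancel₀ Complex.I_ne_zero hk
  exact_mod_cast hI

lemma div_slit {u v : ℂ} (h : ‖u - v‖ < ‖v‖) :
    v ≠ 0 ∧ u ≠ 0 ∧ u / v ∈ Complex.slitPlane := by
  have hv : v ≠ 0 := by
    rintro rfl
    simp at h
    exact absurd h (not_lt.mpr (norm_nonneg u))
  have hu : u ≠ 0 := by
    rintro rfl
    simp at h
  refine ⟨hv, hu, ?_⟩
  by_contra hs
  rw [Complex.mem_slitPlane_iff] at hs
  push_neg at hs
  obtain ⟨hre, him⟩ := hs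
  set w := u / v with hw
  have hwre : w = ((w.re : ℝ) : ℂ) := by
    apply Complex.ext <;> simp [him]
  have huv : u - v = v * (w - 1) := by
    rw [hw]
    field_simp
  rw [huv, norm_mul] at h
  have : ‖w - 1‖ = 1 - w.re := by
    nth_rewrite 1 [hwre]
    rw [← Complex.ofReal_one, ← Complex.ofReal_sub, Complex.norm_real,
      Real.norm_eq_abs, abs_of_nonpos (by linarith)]
    ring
  rw [this] at h
  nlinarith [norm_pos_iff.mpr hv]


lemma wsum_homotopy {n : ℕ} (hn : 0 < n) (H : ℝ → ℝ → ℂ)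
    (hfine : ∀ s ∈ Icc (0:ℝ) 1, ∀ j : ℕ, j < n →
      ‖H s (((j:ℝ)+1)/n) - H s ((j:ℝ)/n)‖ < ‖H s ((j:ℝ)/n)‖)
    (hcont : ∀ j : ℕ, j ≤ n → ContinuousOn (fun s => H s ((j:ℝ)/n)) (Icc 0 1))
    (hloop : ∀ s ∈ Icc (0:ℝ) 1, H s 1 = H s 0) :
    wsum n (H 0) = wsum n (H 1) := by
  have h01 : (0:ℝ) ∈ Icc (0:ℝ) 1 := by constructor <;> norm_num
  have h11 : (1:ℝ) ∈ Icc (0:ℝ) 1 := by constructor <;> norm_num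
  -- nonvanishing at grid points
  have hnz : ∀ s ∈ Icc (0:ℝ) 1, ∀ j : ℕ, j ≤ n → H s ((j:ℝ)/n) ≠ 0 := by
    intro s hs j hj
    rcases lt_or_eq_of_le hj with hj' | rfl
    · exact (div_slit (hfine s hs j hj')).1
    · have : ((j:ℝ)/j) = 1 := div_self (by positivity)
      rw [this, hloop s hs]
      have := (div_slit (hfine s hs 0 hn)).1
      simpa using this
  -- continuity of the winding sum
  have hgc : ContinuousOn (fun s => wsum n (H s)) (Icc (0:ℝ) 1) := by
    apply continuousOn_finset_sum
    intro j hj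
    rw [Finset.mem_range] at hj
    have hcast : (((j+1 : ℕ)):ℝ) = (j:ℝ) + 1 := by push_cast; ring
    have hq : ContinuousOn (fun s => H s (((j:ℝ)+1)/n) / H s ((j:ℝ)/n)) (Icc 0 1) := by
      apply ContinuousOn.div
      · have := hcont (j+1) (by omega)
        rwa [hcast] at this
      · exact hcont j (by omega)
      · intro s hs; exact hnz s hs j (by omega)
    intro s hs
    have hslit := (div_slit (hfine s hs j hj)).2.2
    have harg := ContinuousAt.comp_continuousWithinAt (g := Complex.arg)
      (f := fun s => H s (((j:ℝ)+1)/(n:ℝ)) / H s ((j:ℝ)/(n:ℝ))) (x := s) (s := Icc 0 1)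
      (Complex.continuousAt_arg hslit) (hq s hs)
    exact harg
  -- integrality
  have hint : ∀ s ∈ Icc (0:ℝ) 1, ∃ k : ℤ, wsum n (H s) = 2 * Real.pi * k := by
    intro s hs
    exact wsum_int hn (H s) (fun j hj => hnz s hs j hj) (hloop s hs)
  obtain ⟨k₀, hk₀⟩ := hint 0 h01
  obtain ⟨k₁, hk₁⟩ := hint 1 h11
  by_contra hne
  have hkne : k₀ ≠ k₁ := by
    rintro rfl; exact hne (by rw [hk₀, hk₁])
  -- IVT to a non-multiple of 2π
  have hiv := intermediate_value_uIcc (a := (0:ℝ)) (b := 1)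
     (f := fun s => wsum n (H s)) (by rwa [Set.uIcc_of_le zero_le_one])
  set kmin : ℤ := min k₀ k₁ with hkmin
  set c : ℝ := Real.pi * (2 * (kmin:ℝ) + 1) with hc
  have hcmem : c ∈ Set.uIcc (wsum n (H 0)) (wsum n (H 1)) := by
    rw [Set.mem_uIcc, hk₀, hk₁]
    have hpi := Real.pi_pos
    rcases le_total k₀ k₁ with hle | hle
    · left
      have hmineq : kmin = k₀ := by rw [hkmin]; exact min_eq_left hle
      have h1 : (k₀ : ℝ) ≤ (kmin:ℝ) := by rw [hmineq]
      have h2 : (kmin : ℝ) + 1 ≤ (k₁:ℝ) := by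
        rw [hmineq]
        have : k₀ + 1 ≤ k₁ := by omega
        exact_mod_cast this
      constructor <;> nlinarith
    · right
      have hmineq : kmin = k₁ := by rw [hkmin]; exact min_eq_right hle
      have h1 : (k₁ : ℝ) ≤ (kmin:ℝ) := by rw [hmineq]
      have h2 : (kmin : ℝ) + 1 ≤ (k₀:ℝ) := by
        rw [hmineq]
        have : k₁ + 1 ≤ k₀ := by omega
        exact_mod_cast this
      constructor <;> nlinarith
  obtain ⟨s, hs, hsc'⟩ := hiv hcmem
  rw [Set.uIcc_of_le zero_le_one] at hs
  obtain ⟨ks, hks⟩ := hint s hs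
  have hsc : wsum n (H s) = c := hsc'
  rw [hks] at hsc
  rw [hc] at hsc
  have hpi := Real.pi_ne_zero
  have hr : (2 * (ks : ℝ)) = 2 * (kmin : ℝ) + 1 := by
    have h3 : Real.pi * (2 * (ks:ℝ)) = Real.pi * (2 * (kmin : ℝ) + 1) := by
      linarith
    exact mul_left_cancel₀ hpi h3
  have : (2 * ks : ℤ) = 2 * kmin + 1 := by exact_mod_cast hr
  omega

lemma wsum_odd {m : ℕ} (hm : 0 < m) (x : ℝ → ℂ)
    (hodd : ∀ t : ℝ, x (t + 2⁻¹) = - x t)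
    (hnz : ∀ j : ℕ, j ≤ 2*m → x ((j:ℝ)/((2*m : ℕ):ℝ)) ≠ 0) :
    wsum (2*m) x ≠ 0 := by
  have hm' : ((m:ℝ)) ≠ 0 := by positivity
  have h2m : ((2*m : ℕ) : ℝ) = 2*(m:ℝ) := by push_cast; ring
  -- the shift identity for grid points
  have hshift : ∀ j : ℕ, ((m+j : ℕ):ℝ)/((2*m : ℕ):ℝ) = (j:ℝ)/((2*m:ℕ):ℝ) + 2⁻¹ := by
    intro j
    rw [h2m]
    push_cast
    field_simp
    ring
  -- terms in second half equal terms in first half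
  have hterm : ∀ j : ℕ, wterm (2*m) x (m + j) = wterm (2*m) x j := by
    intro j
    unfold wterm
    have e1 : ((m+j:ℕ):ℝ) = (m:ℝ)+(j:ℝ) := by push_cast; ring
    have e2 : (((m:ℝ)+(j:ℝ))+1)/((2*m:ℕ):ℝ) = (((j:ℝ)+1)/((2*m:ℕ):ℝ)) + 2⁻¹ := by
      rw [h2m]; field_simp; ring
    have e3 : ((m:ℝ)+(j:ℝ))/((2*m:ℕ):ℝ) = ((j:ℝ)/((2*m:ℕ):ℝ)) + 2⁻¹ := by
      rw [h2m]; field_simp; ring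
    rw [e1, e2, e3, hodd, hodd, neg_div_neg_eq]
  have hsplit : wsum (2*m) x = 2 * ∑ j ∈ Finset.range m, wterm (2*m) x j := by
    unfold wsum
    have : 2*m = m + m := by omega
    rw [this, Finset.sum_range_add]
    have : ∑ j ∈ Finset.range m, wterm (m+m) x (m + j)
        = ∑ j ∈ Finset.range m, wterm (m+m) x j := by
      apply Finset.sum_congr rfl
      intro j _
      have := hterm j
      rw [show m + m = 2*m from by omega]
      exact this
    rw [this]; ring
  -- the half sum is π mod 2π
  have hhalf := exp_wpartial (2*m) x m (fun j hj => hnz j (by omega))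
  have hx0 : x 0 ≠ 0 := by have := hnz 0 (by omega); simpa using this
  have hmid : ((m:ℝ))/((2*m:ℕ):ℝ) = 2⁻¹ := by rw [h2m]; field_simp
  have hxm : x (((m:ℕ):ℝ)/((2*m:ℕ):ℝ)) = - x 0 := by
    rw [hmid, show (2⁻¹ : ℝ) = 0 + 2⁻¹ from by ring, hodd]
  rw [hxm] at hhalf
  have hr : (-x 0) / x 0 = -1 := by
    rw [neg_div, div_self hx0]
  rw [hr] at hhalf
  simp only [norm_neg, norm_one, Complex.ofReal_one, div_one] at hhalf
  -- exp(S I) = -1 ⇒ S = π + 2πk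
  set S := ∑ j ∈ Finset.range m, wterm (2*m) x j with hS
  have hexp1 : Complex.exp (((S - Real.pi : ℝ)) * I) = 1 := by
    rw [Complex.ofReal_sub, sub_mul, Complex.exp_sub, hhalf, Complex.exp_pi_mul_I]
    simp
  rw [Complex.exp_eq_one_iff] at hexp1
  obtain ⟨k, hk⟩ := hexp1
  have hSr : (S : ℝ) - Real.pi = 2 * Real.pi * k := by
    have : ((k : ℂ) * (2 * (Real.pi:ℂ) * I)) = ((2 * Real.pi * k : ℝ) : ℂ) * I := by
      push_cast; ring
    rw [this] at hk
    have := mul_right_cancel₀ Complex.I_ne_zero hk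
    exact_mod_cast this
  rw [hsplit]
  intro hzero
  have hS' : S = 0 := by linarith
  rw [hS'] at hSr
  have hpi := Real.pi_ne_zero
  have : (0:ℝ) = Real.pi * (2*k + 1) := by push_cast at hSr ⊢; linarith
  have h21 : (2*(k:ℝ)+1) = 0 := by
    rcases mul_eq_zero.mp this.symm with h | h
    · exact absurd h hpi
    · exact h
  have : (2*k+1 : ℤ) = 0 := by exact_mod_cast h21
  omega

lemma exists_fine (H : ℝ → ℝ → ℂ)
    (hc : ContinuousOn (fun p : ℝ × ℝ => H p.1 p.2) (Icc 0 1 ×ˢ Icc 0 2))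
    (hnz : ∀ p : ℝ × ℝ, p ∈ Icc (0:ℝ) 1 ×ˢ Icc (0:ℝ) 2 → H p.1 p.2 ≠ 0) :
    ∃ Nf : ℕ, 0 < Nf ∧ ∀ n : ℕ, Nf ≤ n → ∀ s ∈ Icc (0:ℝ) 1, ∀ j : ℕ, j < n →
      ‖H s (((j:ℝ)+1)/n) - H s ((j:ℝ)/n)‖ < ‖H s ((j:ℝ)/n)‖ := by
  have hR : IsCompact (Icc (0:ℝ) 1 ×ˢ Icc (0:ℝ) 2) := isCompact_Icc.prod isCompact_Icc
  have hRne : (Icc (0:ℝ) 1 ×ˢ Icc (0:ℝ) 2).Nonempty :=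
    ⟨(0,0), by constructor <;> (constructor <;> norm_num)⟩
  obtain ⟨p₀, hp₀, hmin⟩ := hR.exists_isMinOn hRne hc.norm
  set ρ := ‖H p₀.1 p₀.2‖ with hρdef
  have hρ : 0 < ρ := by
    rw [hρdef]
    exact norm_pos_iff.mpr (hnz p₀ hp₀)
  have huc := hR.uniformContinuousOn_of_continuous hc
  rw [Metric.uniformContinuousOn_iff] at huc
  obtain ⟨δ, hδ, hd⟩ := huc ρ hρ
  refine ⟨⌈1/δ⌉₊ + 1, by omega, ?_⟩
  intro n hn s hs j hj
  have hnpos : 0 < n := by omega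
  have hnR : (0:ℝ) < n := by exact_mod_cast hnpos
  have hmem : ∀ i : ℕ, i ≤ n → (s, (i:ℝ)/n) ∈ Icc (0:ℝ) 1 ×ˢ Icc (0:ℝ) 2 := by
    intro i hi
    refine ⟨hs, ⟨by positivity, ?_⟩⟩
    rw [div_le_iff₀ hnR]
    have : (i:ℝ) ≤ n := by exact_mod_cast hi
    linarith
  have hp1 := hmem (j+1) (by omega)
  have hp2 := hmem j (by omega)
  have hcast : (((j+1:ℕ)):ℝ) = (j:ℝ)+1 := by push_cast; ring
  rw [hcast] at hp1
  have hdist : dist ((s, ((j:ℝ)+1)/n) : ℝ × ℝ) ((s, (j:ℝ)/n) : ℝ × ℝ) < δ := by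
    rw [Prod.dist_eq]
    simp only [dist_self]
    have h1n : ((j:ℝ)+1)/n - (j:ℝ)/n = 1/n := by field_simp; ring
    have : dist (((j:ℝ)+1)/n) ((j:ℝ)/n) = 1/n := by
      rw [Real.dist_eq, h1n]
      exact abs_of_pos (by positivity)
    rw [this]
    have hceil : 1/δ ≤ (⌈1/δ⌉₊ : ℝ) := Nat.le_ceil _
    have hlt : 1/δ < (n:ℝ) := by
      have h2 : ((⌈1/δ⌉₊ : ℕ):ℝ) + 1 ≤ (n:ℝ) := by exact_mod_cast hn
      linarith
    have : 1/(n:ℝ) < δ := by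
      rw [div_lt_iff₀ hnR]
      rw [div_lt_iff₀ hδ] at hlt
      linarith
    simpa using this
  have := hd _ hp1 _ hp2 hdist
  rw [dist_eq_norm] at this
  calc ‖H s (((j:ℝ)+1)/n) - H s ((j:ℝ)/n)‖ < ρ := this
    _ ≤ ‖H s ((j:ℝ)/n)‖ := hmin hp2


/-! ### The circle path and the main winding theorem -/

noncomputable def cir (t : ℝ) : ℂ := Complex.exp ((t:ℂ) * (2*Real.pi*Complex.I))

@[continuity, fun_prop]
lemma cir_cont : Continuous cir := by
  unfold cir; fun_prop

lemma abs_cir (t : ℝ) : ‖cir t‖ = 1 := by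
  unfold cir
  rw [Complex.norm_exp]
  have : ((t:ℂ) * (2*Real.pi*Complex.I)).re = 0 := by simp
  rw [this, Real.exp_zero]

lemma norm_cir (t : ℝ) : ‖cir t‖ = 1 := by
  rw [abs_cir]

lemma cir_ne_zero (t : ℝ) : cir t ≠ 0 := by
  intro h
  have := abs_cir t
  rw [h] at this
  simp at this

lemma cir_add_one (t : ℝ) : cir (t+1) = cir t := by
  unfold cir
  have : ((t+1:ℝ):ℂ) * (2*Real.pi*Complex.I) = (t:ℂ)*(2*Real.pi*Complex.I) + 2*Real.pi*Complex.I := by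
    push_cast; ring
  rw [this, Complex.exp_add, Complex.exp_two_pi_mul_I, mul_one]

lemma cir_add_half (t : ℝ) : cir (t + 2⁻¹) = - cir t := by
  unfold cir
  have : ((t+2⁻¹:ℝ):ℂ) * (2*Real.pi*Complex.I) = (t:ℂ)*(2*Real.pi*Complex.I) + Real.pi*Complex.I := by
    push_cast; ring
  rw [this, Complex.exp_add, Complex.exp_pi_mul_I]
  ring

lemma contOn_comp_ball {h : ℂ → ℂ} {z : ℂ} {δ : ℝ}
    (hc : ContinuousOn h (closedBall z δ)) (g : ℝ × ℝ → ℂ) (hg : Continuous g)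
    (hmaps : ∀ p ∈ Icc (0:ℝ) 1 ×ˢ Icc (0:ℝ) 2, g p ∈ closedBall z δ) :
    ContinuousOn (fun p : ℝ × ℝ => h (g p)) (Icc 0 1 ×ˢ Icc 0 2) :=
  hc.comp hg.continuousOn hmaps

lemma gridcont {H : ℝ → ℝ → ℂ}
    (hH : ContinuousOn (fun p : ℝ × ℝ => H p.1 p.2) (Icc 0 1 ×ˢ Icc 0 2))
    {n : ℕ} (hn : 0 < n) :
    ∀ j : ℕ, j ≤ n → ContinuousOn (fun s => H s ((j:ℝ)/n)) (Icc 0 1) := by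
  intro j hj
  have hnR : (0:ℝ) < n := by exact_mod_cast hn
  have hmem : ∀ s ∈ Icc (0:ℝ) 1, ((s, (j:ℝ)/n) : ℝ × ℝ) ∈ Icc (0:ℝ) 1 ×ˢ Icc (0:ℝ) 2 := by
    intro s hs
    refine ⟨hs, ⟨by positivity, ?_⟩⟩
    rw [div_le_iff₀ hnR]
    have : (j:ℝ) ≤ n := by exact_mod_cast hj
    linarith
  exact hH.comp (Continuous.continuousOn (by continuity)) hmem

/-- Weak invariance of domain in the plane, by winding numbers:
the image of the center of an injectively, continuously mapped closed disk
is interior to the image. -/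
theorem winding_inj_interior {h : ℂ → ℂ} {z : ℂ} {δ : ℝ} (hδ : 0 < δ)
    (hc : ContinuousOn h (Metric.closedBall z δ))
    (hi : Set.InjOn h (Metric.closedBall z δ)) :
    h z ∈ interior (h '' Metric.closedBall z δ) := by
  have hzmem : z ∈ closedBall z δ := mem_closedBall_self hδ.le
  set q := h z with hqdef
  have hsph : ∀ t : ℝ, z + (δ:ℂ) * cir t ∈ sphere z δ := by
    intro t
    rw [mem_sphere, dist_eq_norm]
    have : z + (δ:ℂ)*cir t - z = (δ:ℂ)*cir t := by ring
    rw [this, norm_mul, norm_cir, Complex.norm_real, Real.norm_eq_abs, abs_of_pos hδ, mul_one]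
  have hsphB : ∀ t : ℝ, z + (δ:ℂ) * cir t ∈ closedBall z δ :=
    fun t => sphere_subset_closedBall (hsph t)
  have hinB : ∀ s : ℝ, s ∈ Icc (0:ℝ) 1 → ∀ t : ℝ, z - ((s*δ:ℝ):ℂ)*cir t ∈ closedBall z δ := by
    intro s hs t
    rw [mem_closedBall, dist_eq_norm]
    have : z - ((s*δ:ℝ):ℂ)*cir t - z = -(((s*δ:ℝ):ℂ)*cir t) := by ring
    rw [this, norm_neg, norm_mul, norm_cir, mul_one, Complex.norm_real, Real.norm_eq_abs,
      _root_.abs_of_nonneg (by nlinarith [hs.1] : (0:ℝ) ≤ s*δ)]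
    nlinarith [hs.2, hs.1]
  have hinB2 : ∀ s : ℝ, s ∈ Icc (0:ℝ) 1 → ∀ t : ℝ,
      z + (((1-s)*δ:ℝ):ℂ)*cir t ∈ closedBall z δ := by
    intro s hs t
    rw [mem_closedBall, dist_eq_norm]
    have : z + (((1-s)*δ:ℝ):ℂ)*cir t - z = (((1-s)*δ:ℝ):ℂ)*cir t := by ring
    rw [this, norm_mul, norm_cir, mul_one, Complex.norm_real, Real.norm_eq_abs,
      _root_.abs_of_nonneg (by nlinarith [hs.2] : (0:ℝ) ≤ (1-s)*δ)]
    nlinarith [hs.1, hs.2]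
  set C := h '' sphere z δ with hCdef
  have hCcomp : IsCompact C :=
    (isCompact_sphere z δ).image_of_continuousOn (hc.mono sphere_subset_closedBall)
  have hqC : q ∉ C := by
    rintro ⟨w, hw, hwq⟩
    have : w = z := hi (sphere_subset_closedBall hw) hzmem hwq
    rw [this] at hw
    rw [mem_sphere, dist_self] at hw
    exact absurd hw.symm (ne_of_gt hδ)
  have hCne : C.Nonempty := ⟨h (z + (δ:ℂ)*cir 0), Set.mem_image_of_mem _ (hsph 0)⟩
  set ρ := Metric.infDist q C with hρdef
  have hρpos : 0 < ρ := (hCcomp.isClosed.notMem_iff_infDist_pos hCne).mp hqC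
  rw [mem_interior]
  refine ⟨Metric.ball q ρ, ?_, isOpen_ball, mem_ball_self hρpos⟩
  intro q' hq'
  by_contra hq'img
  have hqimg : q ∈ h '' closedBall z δ := Set.mem_image_of_mem h hzmem
  have hq'q : q' ≠ q := by rintro rfl; exact hq'img hqimg
  have hnoval : ∀ w ∈ closedBall z δ, h w ≠ q' := by
    intro w hw hwq
    exact hq'img ⟨w, hw, hwq⟩
  -- points on the segment [q,q'] are not values of h on the sphere
  have hseg : ∀ s : ℝ, s ∈ Icc (0:ℝ) 1 → ∀ w ∈ sphere z δ,
      h w ≠ ((1-s:ℝ):ℂ)*q + ((s:ℝ):ℂ)*q' := by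
    intro s hs w hw heq
    have hmem : h w ∈ C := Set.mem_image_of_mem _ hw
    have hd1 : dist q (h w) ≤ s * dist q q' := by
      rw [heq]
      have : q - (((1-s:ℝ):ℂ)*q + ((s:ℝ):ℂ)*q') = ((s:ℝ):ℂ) * (q - q') := by
        push_cast; ring
      rw [dist_eq_norm, this, norm_mul, Complex.norm_real, Real.norm_eq_abs,
        _root_.abs_of_nonneg hs.1, dist_eq_norm]
    have hd2 : ρ ≤ dist q (h w) := Metric.infDist_le_dist_of_mem hmem
    have hd3 : dist q q' < ρ := by
      rw [dist_comm]
      exact mem_ball.mp hq'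
    nlinarith [hs.2, dist_nonneg (x := q) (y := q')]
  -- the three homotopies
  set A : ℝ → ℝ → ℂ := fun s t => h (z + (δ:ℂ)*cir t) - h (z - ((s*δ:ℝ):ℂ)*cir t) with hAdef
  set B : ℝ → ℝ → ℂ := fun s t => h (z + (δ:ℂ)*cir t) - (((1-s:ℝ):ℂ)*q + ((s:ℝ):ℂ)*q')
    with hBdef
  set Cc : ℝ → ℝ → ℂ := fun s t => h (z + (((1-s)*δ:ℝ):ℂ)*cir t) - q' with hCcdef
  have hR : ∀ p : ℝ × ℝ, p ∈ Icc (0:ℝ) 1 ×ˢ Icc (0:ℝ) 2 → p.1 ∈ Icc (0:ℝ) 1 :=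
    fun p hp => hp.1
  -- continuity of the three homotopies
  have hcA : ContinuousOn (fun p : ℝ × ℝ => A p.1 p.2) (Icc 0 1 ×ˢ Icc 0 2) := by
    apply ContinuousOn.sub
    · exact contOn_comp_ball hc _ (by fun_prop) (fun p _ => hsphB p.2)
    · exact contOn_comp_ball hc _ (by fun_prop) (fun p hp => hinB p.1 (hR p hp) p.2)
  have hcB : ContinuousOn (fun p : ℝ × ℝ => B p.1 p.2) (Icc 0 1 ×ˢ Icc 0 2) := by
    apply ContinuousOn.sub
    · exact contOn_comp_ball hc _ (by fun_prop) (fun p _ => hsphB p.2)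
    · exact Continuous.continuousOn (by fun_prop)
  have hcC : ContinuousOn (fun p : ℝ × ℝ => Cc p.1 p.2) (Icc 0 1 ×ˢ Icc 0 2) := by
    apply ContinuousOn.sub
    · exact contOn_comp_ball hc _ (by fun_prop) (fun p hp => hinB2 p.1 (hR p hp) p.2)
    · exact continuousOn_const
  -- nonvanishing
  have hnzA : ∀ p : ℝ × ℝ, p ∈ Icc (0:ℝ) 1 ×ˢ Icc (0:ℝ) 2 → A p.1 p.2 ≠ 0 := by
    rintro ⟨s, t⟩ hp
    simp only [hAdef]
    rw [sub_ne_zero]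
    intro heq
    have := hi (hsphB t) (hinB s hp.1 t) heq
    have h2 : ((1 + s)*δ:ℝ) • cir t = 0 := by
      have h3 : (δ:ℂ)*cir t = - (((s*δ:ℝ):ℂ)*cir t) := by
        have := sub_eq_sub_iff_add_eq_add.mp (congrArg (· - z) this)
        push_cast at this ⊢
        linear_combination this - 2*z
      rw [real_smul]
      push_cast at h3 ⊢
      linear_combination h3
    rcases smul_eq_zero.mp h2 with h4 | h4
    · have hs0 := hp.1.1
      nlinarith [hδ]
    · exact cir_ne_zero t h4
  have hnzB : ∀ p : ℝ × ℝ, p ∈ Icc (0:ℝ) 1 ×ˢ Icc (0:ℝ) 2 → B p.1 p.2 ≠ 0 := by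
    rintro ⟨s, t⟩ hp
    simp only [hBdef]
    rw [sub_ne_zero]
    exact hseg s hp.1 _ (hsph t)
  have hnzC : ∀ p : ℝ × ℝ, p ∈ Icc (0:ℝ) 1 ×ˢ Icc (0:ℝ) 2 → Cc p.1 p.2 ≠ 0 := by
    rintro ⟨s, t⟩ hp
    simp only [hCcdef]
    rw [sub_ne_zero]
    exact hnoval _ (hinB2 s hp.1 t)
  -- choose a common fine grid
  obtain ⟨NA, hNA0, hNA⟩ := exists_fine A hcA hnzA
  obtain ⟨NB, hNB0, hNB⟩ := exists_fine B hcB hnzB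
  obtain ⟨NC, hNC0, hNC⟩ := exists_fine Cc hcC hnzC
  set m := NA + NB + NC with hm
  set n := 2*m with hn
  have hm0 : 0 < m := by omega
  have hn0 : 0 < n := by omega
  -- loop conditions
  have hcir10 : cir 1 = cir 0 := by
    have := cir_add_one 0
    norm_num at this
    exact this
  have hloopA : ∀ s ∈ Icc (0:ℝ) 1, A s 1 = A s 0 := by
    intro s _; simp only [hAdef, hcir10]
  have hloopB : ∀ s ∈ Icc (0:ℝ) 1, B s 1 = B s 0 := by
    intro s _; simp only [hBdef, hcir10]
  have hloopC : ∀ s ∈ Icc (0:ℝ) 1, Cc s 1 = Cc s 0 := by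
    intro s _; simp only [hCcdef, hcir10]
  -- homotopy invariance along the three homotopies
  have wA := wsum_homotopy hn0 A (hNA n (by omega)) (gridcont hcA hn0) hloopA
  have wB := wsum_homotopy hn0 B (hNB n (by omega)) (gridcont hcB hn0) hloopB
  have wC := wsum_homotopy hn0 Cc (hNC n (by omega)) (gridcont hcC hn0) hloopC
  -- identifications of endpoints of the homotopies
  have hAB : A 0 = B 0 := by
    funext t
    simp only [hAdef, hBdef]
    norm_num
    exact hqdef.symm
  have hBC : B 1 = Cc 0 := by
    funext t
    simp only [hBdef, hCcdef]
    norm_num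
  have hCconst : wsum n (Cc 1) = 0 := by
    have hCc1 : ∀ t : ℝ, Cc 1 t = q - q' := by
      intro t
      simp only [hCcdef]
      norm_num
      exact hqdef.symm
    unfold wsum wterm
    apply Finset.sum_eq_zero
    intro j _
    rw [hCc1, hCc1, div_self (sub_ne_zero.mpr (fun hh => hq'q hh.symm))]
    simp
  -- the odd loop has nonzero winding
  have hodd : ∀ t : ℝ, A 1 (t + 2⁻¹) = - A 1 t := by
    intro t
    simp only [hAdef, cir_add_half]
    have e1 : z + (δ:ℂ)*(-cir t) = z - ((1*δ:ℝ):ℂ)*cir t := by push_cast; ring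
    have e2 : z - ((1*δ:ℝ):ℂ)*(-cir t) = z + (δ:ℂ)*cir t := by push_cast; ring
    rw [e1, e2]
    ring
  have hgridnz : ∀ j : ℕ, j ≤ 2*m → A 1 ((j:ℝ)/((2*m : ℕ):ℝ)) ≠ 0 := by
    intro j hj
    have hj2 : ((j:ℝ)/((2*m:ℕ):ℝ)) ∈ Icc (0:ℝ) 2 := by
      have h2m : (0:ℝ) < ((2*m:ℕ):ℝ) := by exact_mod_cast hn0
      constructor
      · positivity
      · rw [div_le_iff₀ h2m]
        have : (j:ℝ) ≤ ((2*m:ℕ):ℝ) := by exact_mod_cast hj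
        linarith
    exact hnzA (1, (j:ℝ)/((2*m:ℕ):ℝ)) ⟨⟨zero_le_one, le_refl 1⟩, hj2⟩
  have hoddn := wsum_odd hm0 (A 1) hodd hgridnz
  -- contradiction
  apply hoddn
  rw [← hn]
  rw [← wA, hAB, wB, hBC, wC, hCconst]


/-! ### Transfer to the Euclidean plane -/

abbrev E2 := EuclideanSpace ℝ (Fin 2)

theorem winding_inj_interior_E {h : E2 → E2} {z : E2} {δ : ℝ} (hδ : 0 < δ)
    (hc : ContinuousOn h (Metric.closedBall z δ))
    (hi : Set.InjOn h (Metric.closedBall z δ)) :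
    h z ∈ interior (h '' Metric.closedBall z δ) := by
  set ι : ℂ ≃ₗᵢ[ℝ] E2 := Complex.orthonormalBasisOneI.repr with hι
  set z' : ℂ := ι.symm z with hz'
  have hiz : ι z' = z := ι.apply_symm_apply z
  have himg : ι '' closedBall z' δ = closedBall z δ := by
    rw [ι.image_closedBall, hiz]
  have hmapsTo : Set.MapsTo (fun w : ℂ => ι w) (closedBall z' δ) (closedBall z δ) := by
    intro w hw
    rw [← himg]
    exact Set.mem_image_of_mem _ hw
  set h' : ℂ → ℂ := fun w => ι.symm (h (ι w)) with hh'
  have hc' : ContinuousOn h' (closedBall z' δ) := by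
    apply Continuous.comp_continuousOn ι.symm.continuous
    exact hc.comp ι.continuous.continuousOn hmapsTo
  have hi' : Set.InjOn h' (closedBall z' δ) := by
    intro a ha b hb hab
    have : h (ι a) = h (ι b) := ι.symm.injective hab
    have := hi (hmapsTo ha) (hmapsTo hb) this
    exact ι.injective this
  have hmem := winding_inj_interior hδ hc' hi'
  have hset : h' '' closedBall z' δ = ι.symm '' (h '' closedBall z δ) := by
    rw [← himg, hh']
    ext v
    simp only [Set.mem_image]
    constructor
    · rintro ⟨w, hw, rfl⟩
      exact ⟨h (ι w), ⟨ι w, ⟨w, hw, rfl⟩, rfl⟩, rfl⟩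
    · rintro ⟨u, ⟨w', ⟨w, hw, rfl⟩, rfl⟩, rfl⟩
      exact ⟨w, hw, rfl⟩
  rw [hset] at hmem
  have h2 : (ι.symm.toHomeomorph) '' (h '' closedBall z δ) = ι.symm '' (h '' closedBall z δ) := rfl
  rw [← h2, ← Homeomorph.image_interior] at hmem
  obtain ⟨y, hy, hyeq⟩ := hmem
  have hyz : y = h z := by
    apply ι.symm.injective
    have : h' z' = ι.symm (h z) := by rw [hh']; simp only [hiz]
    rw [← this, ← hyeq]
    rfl
  rwa [hyz] at hy


/-! ### Interior characterization for a topological disk in a surface -/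

section Surface

variable {N : Type*} [TopologicalSpace N] [T2Space N] [ChartedSpace E2 N]

lemma norm_lt_one_iff_interior (D : Set N)
    (e : ↥D ≃ₜ ↥(Metric.closedBall (0:E2) 1)) {m : N} (hm : m ∈ D) :
    m ∈ interior D ↔ ‖((e ⟨m, hm⟩ : ↥(Metric.closedBall (0:E2) 1)) : E2)‖ < 1 := by
  classical
  let K : Set E2 := Metric.closedBall (0:E2) 1
  have hK : K = Metric.closedBall (0:E2) 1 := rfl
  set ψ := chartAt E2 m with hψ
  have hψm : m ∈ ψ.source := mem_chart_source E2 m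
  set z : E2 := ((e ⟨m, hm⟩ : ↥K) : E2) with hz
  -- the extension of `e` by junk
  set f : N → E2 := fun x => if hx : x ∈ D then ((e ⟨x, hx⟩ : ↥K) : E2) else 0 with hf
  have hfD : ∀ x : N, ∀ hx : x ∈ D, f x = ((e ⟨x, hx⟩ : ↥K) : E2) := fun x hx => dif_pos hx
  have hfcont : ContinuousOn f D := by
    rw [continuousOn_iff_continuous_restrict]
    have heq : D.domRestrict f = fun x : ↥D => ((e x : ↥K) : E2) := by
      funext x
      simp only [Set.domRestrict, hf, dif_pos x.2, Subtype.coe_eta]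
    rw [heq]
    exact continuous_subtype_val.comp e.continuous
  have hfinj : Set.InjOn f D := by
    intro a ha b hb hab
    rw [hfD a ha, hfD b hb] at hab
    have h1 : e ⟨a, ha⟩ = e ⟨b, hb⟩ := Subtype.coe_injective hab
    have h2 : (⟨a, ha⟩ : ↥D) = ⟨b, hb⟩ := e.injective h1
    exact congrArg Subtype.val h2
  -- the extension of `e.symm` by junk
  set g : E2 → N := fun w => if hw : w ∈ K then ((e.symm ⟨w, hw⟩ : ↥D) : N) else m with hg
  have hgK : ∀ w : E2, ∀ hw : w ∈ K, g w = ((e.symm ⟨w, hw⟩ : ↥D) : N) := fun w hw => dif_pos hw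
  have hgcont : ContinuousOn g K := by
    rw [continuousOn_iff_continuous_restrict]
    have heq : K.domRestrict g = fun w : ↥K => ((e.symm w : ↥D) : N) := by
      funext w
      simp only [Set.domRestrict, hg, dif_pos w.2, Subtype.coe_eta]
    rw [heq]
    exact continuous_subtype_val.comp e.symm.continuous
  constructor
  · -- interior → norm < 1
    intro hmi
    set T := ψ '' (interior D ∩ ψ.source) with hT
    have hTopen : IsOpen T :=
      ψ.isOpen_image_of_subset_source (isOpen_interior.inter ψ.open_source)
        Set.inter_subset_right
    have hqT : ψ m ∈ T := ⟨m, ⟨hmi, hψm⟩, rfl⟩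
    obtain ⟨ε, hε, hball⟩ := Metric.isOpen_iff.mp hTopen _ hqT
    have hδpos : 0 < ε/2 := by linarith
    have hcbT : Metric.closedBall (ψ m) (ε/2) ⊆ T :=
      subset_trans (Metric.closedBall_subset_ball (by linarith)) hball
    have hTtarget : T ⊆ ψ.target := by
      rintro u ⟨x, hx, rfl⟩
      exact ψ.map_source hx.2
    have hsymm : ∀ u ∈ Metric.closedBall (ψ m) (ε/2),
        ψ.symm u ∈ interior D ∧ ψ.symm u ∈ ψ.source ∧ ψ (ψ.symm u) = u := by
      intro u hu
      obtain ⟨x, hx, rfl⟩ := hcbT hu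
      rw [ψ.left_inv hx.2]
      exact ⟨hx.1, hx.2, rfl⟩
    set h2 : E2 → E2 := fun u => f (ψ.symm u) with hh2
    have hc2 : ContinuousOn h2 (Metric.closedBall (ψ m) (ε/2)) := by
      apply hfcont.comp ((ψ.continuousOn_symm).mono (subset_trans hcbT hTtarget))
      intro u hu
      exact interior_subset (hsymm u hu).1
    have hi2 : Set.InjOn h2 (Metric.closedBall (ψ m) (ε/2)) := by
      intro a ha b hb hab
      have h3 := hfinj (interior_subset (hsymm a ha).1) (interior_subset (hsymm b hb).1) hab
      calc a = ψ (ψ.symm a) := ((hsymm a ha).2.2).symm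
        _ = ψ (ψ.symm b) := by rw [h3]
        _ = b := (hsymm b hb).2.2
    have hwind := winding_inj_interior_E hδpos hc2 hi2
    have h2m : h2 (ψ m) = z := by
      rw [hh2]
      simp only []
      rw [ψ.left_inv hψm, hfD m hm]
    have himgK : h2 '' Metric.closedBall (ψ m) (ε/2) ⊆ K := by
      rintro v ⟨u, hu, rfl⟩
      rw [hh2]
      simp only []
      rw [hfD _ (interior_subset (hsymm u hu).1)]
      exact (e ⟨ψ.symm u, _⟩).2
    have : z ∈ interior K := by
      rw [← h2m]
      exact interior_mono himgK hwind
    rw [show K = Metric.closedBall (0:E2) 1 from rfl,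
      interior_closedBall (0:E2) one_ne_zero, mem_ball_zero_iff] at this
    exact this
  · -- norm < 1 → interior
    intro hz1
    set T₃ : Set ↥K := (fun k : ↥K => ((e.symm k : ↥D) : N)) ⁻¹' ψ.source with hT₃
    have hT₃open : IsOpen T₃ :=
      (continuous_subtype_val.comp e.symm.continuous).isOpen_preimage _ ψ.open_source
    have hzK : z ∈ K := (e ⟨m, hm⟩).2
    have hzT₃ : (⟨z, hzK⟩ : ↥K) ∈ T₃ := by
      rw [hT₃]
      simp only [Set.mem_preimage]
      have : (⟨z, hzK⟩ : ↥K) = e ⟨m, hm⟩ := Subtype.ext rfl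
      rw [this, Homeomorph.symm_apply_apply]
      exact hψm
    obtain ⟨U, hUopen, hUeq⟩ := isOpen_induced_iff.mp hT₃open
    have hzU : z ∈ U := by
      have : (⟨z, hzK⟩ : ↥K) ∈ (Subtype.val ⁻¹' U : Set ↥K) := by rw [hUeq]; exact hzT₃
      exact this
    obtain ⟨ε, hεpos, hεball⟩ := Metric.isOpen_iff.mp hUopen z hzU
    set δ := min (ε/2) ((1 - ‖z‖)/2) with hδ
    have hδpos : 0 < δ := by
      apply lt_min (by linarith)
      linarith
    have hδprop : ∀ w ∈ Metric.closedBall z δ, w ∈ K ∧ w ∈ U := by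
      intro w hw
      rw [Metric.mem_closedBall] at hw
      constructor
      · rw [hK, Metric.mem_closedBall, dist_zero_right]
        have h4 : ‖w‖ ≤ ‖z‖ + dist w z := by
          rw [dist_eq_norm]
          have := norm_add_le (w - z) z
          simp only [sub_add_cancel] at this
          linarith
        have h5 : δ ≤ (1 - ‖z‖)/2 := min_le_right _ _
        linarith
      · apply hεball
        rw [Metric.mem_ball]
        have h5 : δ ≤ ε/2 := min_le_left _ _
        linarith
    have hgw : ∀ w ∈ Metric.closedBall z δ, g w ∈ D ∧ g w ∈ ψ.source := by
      intro w hw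
      obtain ⟨hwK, hwU⟩ := hδprop w hw
      rw [hgK w hwK]
      refine ⟨(e.symm ⟨w, hwK⟩).2, ?_⟩
      have : (⟨w, hwK⟩ : ↥K) ∈ T₃ := by
        rw [← hUeq]
        exact hwU
      exact this
    set h3 : E2 → E2 := fun u => ψ (g u) with hh3
    have hc3 : ContinuousOn h3 (Metric.closedBall z δ) := by
      apply ψ.continuousOn.comp (hgcont.mono (fun w hw => (hδprop w hw).1))
      intro w hw
      exact (hgw w hw).2
    have hi3 : Set.InjOn h3 (Metric.closedBall z δ) := by
      intro a ha b hb hab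
      have h6 : g a = g b := ψ.injOn (hgw a ha).2 (hgw b hb).2 hab
      rw [hgK a (hδprop a ha).1, hgK b (hδprop b hb).1] at h6
      have h7 := e.symm.injective (Subtype.coe_injective h6)
      exact congrArg Subtype.val h7
    have hwind := winding_inj_interior_E hδpos hc3 hi3
    have h3z : h3 z = ψ m := by
      rw [hh3]
      simp only []
      rw [hgK z hzK]
      have : (⟨z, hzK⟩ : ↥K) = e ⟨m, hm⟩ := Subtype.ext rfl
      rw [this, Homeomorph.symm_apply_apply]
    rw [h3z] at hwind
    obtain ⟨O, hOsub, hOopen, hmO⟩ := mem_interior.mp hwind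
    have hVopen : IsOpen (ψ.source ∩ ψ ⁻¹' O) :=
      ψ.continuousOn.isOpen_inter_preimage ψ.open_source hOopen
    have hmV : m ∈ ψ.source ∩ ψ ⁻¹' O := ⟨hψm, hmO⟩
    have hVD : ψ.source ∩ ψ ⁻¹' O ⊆ D := by
      rintro x ⟨hxs, hxO⟩
      obtain ⟨w, hw, hwx⟩ := hOsub hxO
      have h8 : g w ∈ ψ.source := (hgw w hw).2
      have h9 : x = g w := by
        apply ψ.injOn hxs h8
        rw [← hwx]
      rw [h9, hgK w (hδprop w hw).1]
      exact (e.symm ⟨w, _⟩).2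
    exact mem_interior.mpr ⟨_, hVD, hVopen, hmV⟩

end Surface


/-! ### Radial push machinery on the plane -/

section Push

def cfun (y : E2) : ℝ := max (1 - ‖y‖) 0

def push (x y : E2) : E2 := y + cfun y • x

lemma cfun_nonneg (y : E2) : 0 ≤ cfun y := le_max_right _ _

@[continuity, fun_prop]
lemma cfun_cont : Continuous cfun := (continuous_const.sub continuous_norm).max continuous_const

lemma cfun_lip (y y' : E2) : |cfun y - cfun y'| ≤ ‖y - y'‖ := by
  calc |cfun y - cfun y'| ≤ |(1 - ‖y‖) - (1 - ‖y'‖)| := abs_max_sub_max_le_abs _ _ _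
    _ = |‖y‖ - ‖y'‖| := by rw [abs_sub_comm]; congr 1; ring
    _ ≤ ‖y - y'‖ := abs_norm_sub_norm_le _ _

lemma cfun_zero : cfun 0 = 1 := by simp [cfun]

lemma cfun_eq_zero {y : E2} (h : 1 ≤ ‖y‖) : cfun y = 0 := max_eq_right (by linarith)

lemma cfun_of_le {y : E2} (h : ‖y‖ ≤ 1) : cfun y = 1 - ‖y‖ := max_eq_left (by linarith)

@[continuity, fun_prop]
lemma push_cont : Continuous (fun p : E2 × E2 => push p.1 p.2) := by
  unfold push
  fun_prop

lemma push_inj {x : E2} (hx : ‖x‖ < 1) : Function.Injective (push x) := by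
  intro a b hab
  by_contra hne
  have hBA : a - b = (cfun b - cfun a) • x := by
    have : a + cfun a • x = b + cfun b • x := hab
    have h2 : a - b = cfun b • x - cfun a • x := by
      linear_combination (norm := module) this
    rw [h2, ← sub_smul]
  have h3 : ‖a - b‖ ≤ ‖a - b‖ * ‖x‖ := by
    calc ‖a - b‖ = |cfun b - cfun a| * ‖x‖ := by rw [hBA, norm_smul, Real.norm_eq_abs]
      _ ≤ ‖b - a‖ * ‖x‖ := by
          apply mul_le_mul_of_nonneg_right (cfun_lip b a) (norm_nonneg x)
      _ = ‖a - b‖ * ‖x‖ := by rw [norm_sub_rev]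
  have h4 : 0 < ‖a - b‖ := by
    rw [norm_pos_iff, sub_ne_zero]
    exact hne
  nlinarith

lemma push_surj {x : E2} (hx : ‖x‖ < 1) : Function.Surjective (push x) := by
  intro w
  set F : ℝ → ℝ := fun r => ‖w - max (1 - r) 0 • x‖ with hF
  have hlip : LipschitzWith ‖x‖₊ F := by
    apply LipschitzWith.of_dist_le_mul
    intro r r'
    rw [Real.dist_eq, Real.dist_eq]
    have h1 : |F r - F r'| ≤ ‖(max (1 - r') 0 - max (1 - r) 0) • x‖ := by
      have := abs_norm_sub_norm_le (w - max (1 - r) 0 • x) (w - max (1 - r') 0 • x)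
      calc |F r - F r'| ≤ ‖(w - max (1-r) 0 • x) - (w - max (1-r') 0 • x)‖ := this
        _ = ‖(max (1 - r') 0 - max (1 - r) 0) • x‖ := by
            congr 1
            rw [sub_smul]
            abel
    rw [norm_smul, Real.norm_eq_abs] at h1
    have h2 : |max (1 - r') 0 - max (1 - r) 0| ≤ |r - r'| := by
      calc |max (1 - r') 0 - max (1 - r) 0| ≤ |(1 - r') - (1 - r)| := abs_max_sub_max_le_abs _ _ _
        _ = |r - r'| := by congr 1; ring
    calc |F r - F r'| ≤ |max (1 - r') 0 - max (1 - r) 0| * ‖x‖ := h1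
      _ ≤ |r - r'| * ‖x‖ := mul_le_mul_of_nonneg_right h2 (norm_nonneg x)
      _ = ‖x‖₊ * |r - r'| := by rw [coe_nnnorm, mul_comm]
  have hcw : ContractingWith ‖x‖₊ F := by
    constructor
    · exact_mod_cast hx
    · exact hlip
  set r₀ := ContractingWith.fixedPoint F hcw with hr₀
  have hfix : F r₀ = r₀ := hcw.fixedPoint_isFixedPt
  refine ⟨w - max (1 - r₀) 0 • x, ?_⟩
  have hy : ‖w - max (1 - r₀) 0 • x‖ = r₀ := hfix
  unfold push
  rw [show cfun (w - max (1 - r₀) 0 • x) = max (1 - r₀) 0 by rw [cfun, hy]]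
  abel

lemma push_mem {x y : E2} (hx : ‖x‖ < 1) (hy : ‖y‖ ≤ 1) : ‖push x y‖ ≤ 1 := by
  unfold push
  calc ‖y + cfun y • x‖ ≤ ‖y‖ + ‖cfun y • x‖ := norm_add_le _ _
    _ = ‖y‖ + cfun y * ‖x‖ := by
        rw [norm_smul, Real.norm_eq_abs, _root_.abs_of_nonneg (cfun_nonneg y)]
    _ ≤ 1 := by
        rw [cfun_of_le hy]
        nlinarith [norm_nonneg x]

lemma push_boundary {x y : E2} (hy : 1 ≤ ‖y‖) : push x y = y := by
  unfold push
  rw [cfun_eq_zero hy, zero_smul, add_zero]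

lemma push_zero (x : E2) : push x 0 = x := by
  unfold push
  rw [cfun_zero, one_smul, zero_add]

lemma push_preserve {x y : E2} (h : ‖push x y‖ ≤ 1) : ‖y‖ ≤ 1 := by
  by_contra hc
  push_neg at hc
  rw [push_boundary hc.le] at h
  linarith

/-- the bijection of the plane -/
noncomputable def pushEquiv (x : E2) (hx : ‖x‖ < 1) : E2 ≃ E2 :=
  Equiv.ofBijective (push x) ⟨push_inj hx, push_surj hx⟩

lemma pushEquiv_apply (x : E2) (hx : ‖x‖ < 1) (y : E2) : pushEquiv x hx y = push x y := rfl

/-- the self-homeomorphism (as an `Equiv`) of the closed unit disk -/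
noncomputable def pushK (x : E2) (hx : ‖x‖ < 1) :
    ↥(Metric.closedBall (0:E2) 1) ≃ ↥(Metric.closedBall (0:E2) 1) where
  toFun := fun y => ⟨push x y.1, by
    rw [Metric.mem_closedBall, dist_zero_right]
    exact push_mem hx (by
      have := y.2
      rwa [Metric.mem_closedBall, dist_zero_right] at this)⟩
  invFun := fun w => ⟨(pushEquiv x hx).symm w.1, by
    rw [Metric.mem_closedBall, dist_zero_right]
    apply push_preserve (x := x)
    rw [show push x ((pushEquiv x hx).symm w.1) = w.1 from (pushEquiv x hx).apply_symm_apply w.1]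
    have := w.2
    rwa [Metric.mem_closedBall, dist_zero_right] at this⟩
  left_inv := fun y => Subtype.ext ((pushEquiv x hx).symm_apply_apply y.1)
  right_inv := fun w => Subtype.ext ((pushEquiv x hx).apply_symm_apply w.1)

lemma pushK_coe (x : E2) (hx : ‖x‖ < 1) (y : ↥(Metric.closedBall (0:E2) 1)) :
    ((pushK x hx y : ↥(Metric.closedBall (0:E2) 1)) : E2) = push x y.1 := rfl

lemma pushK_boundary (x : E2) (hx : ‖x‖ < 1) {y : ↥(Metric.closedBall (0:E2) 1)}
    (hy : 1 ≤ ‖(y : E2)‖) : pushK x hx y = y :=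
  Subtype.ext (push_boundary hy)

lemma pushK_symm_boundary (x : E2) (hx : ‖x‖ < 1) {y : ↥(Metric.closedBall (0:E2) 1)}
    (hy : 1 ≤ ‖(y : E2)‖) : (pushK x hx).symm y = y := by
  rw [Equiv.symm_apply_eq, pushK_boundary x hx hy]

lemma zero_mem_K : (0:E2) ∈ Metric.closedBall (0:E2) 1 := by
  rw [Metric.mem_closedBall, dist_zero_right, norm_zero]; linarith

lemma mem_K_of_lt {x : E2} (hx : ‖x‖ < 1) : x ∈ Metric.closedBall (0:E2) 1 := by
  rw [Metric.mem_closedBall, dist_zero_right]; exact hx.le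

lemma pushK_zero (x : E2) (hx : ‖x‖ < 1) :
    pushK x hx ⟨0, zero_mem_K⟩ = ⟨x, mem_K_of_lt hx⟩ :=
  Subtype.ext (push_zero x)

lemma pushK_symm_self (x : E2) (hx : ‖x‖ < 1) :
    (pushK x hx).symm ⟨x, mem_K_of_lt hx⟩ = ⟨0, zero_mem_K⟩ := by
  rw [Equiv.symm_apply_eq, pushK_zero]

lemma pushK_family_cont {P : Type*} [TopologicalSpace P] {ξ : P → E2}
    (hξ : Continuous ξ) (hb : ∀ p, ‖ξ p‖ < 1) :
    Continuous (fun q : P × ↥(Metric.closedBall (0:E2) 1) =>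
      pushK (ξ q.1) (hb q.1) q.2) := by
  apply Continuous.subtype_mk
  show Continuous (fun q : P × ↥(Metric.closedBall (0:E2) 1) => push (ξ q.1) (q.2 : E2))
  have h1 : Continuous (fun q : P × ↥(Metric.closedBall (0:E2) 1) => ((ξ q.1, (q.2 : E2)) : E2 × E2)) :=
    (hξ.comp continuous_fst).prodMk (continuous_subtype_val.comp continuous_snd)
  exact push_cont.comp h1

lemma pushK_symm_family_cont {P : Type*} [TopologicalSpace P] [CompactSpace P] [T2Space P]
    {ξ : P → E2} (hξ : Continuous ξ) (hb : ∀ p, ‖ξ p‖ < 1) :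
    Continuous (fun q : P × ↥(Metric.closedBall (0:E2) 1) =>
      (pushK (ξ q.1) (hb q.1)).symm q.2) := by
  haveI : CompactSpace ↥(Metric.closedBall (0:E2) 1) :=
    isCompact_iff_compactSpace.mp (isCompact_closedBall (0:E2) 1)
  set Ψ : P × ↥(Metric.closedBall (0:E2) 1) ≃ P × ↥(Metric.closedBall (0:E2) 1) :=
    { toFun := fun q => (q.1, pushK (ξ q.1) (hb q.1) q.2)
      invFun := fun q => (q.1, (pushK (ξ q.1) (hb q.1)).symm q.2)
      left_inv := fun q => by simp
      right_inv := fun q => by simp } with hΨ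
  have hcont : Continuous Ψ :=
    continuous_fst.prodMk (pushK_family_cont hξ hb)
  set Ψh := hcont.homeoOfEquivCompactToT2 with hΨh
  have hsymm : Continuous (fun q : P × ↥(Metric.closedBall (0:E2) 1) => Ψh.symm q) :=
    Ψh.symm.continuous
  have heq : (fun q : P × ↥(Metric.closedBall (0:E2) 1) =>
      (pushK (ξ q.1) (hb q.1)).symm q.2)
      = fun q => (Ψh.symm q).2 := by
    funext q
    rfl
  rw [heq]
  exact continuous_snd.comp hsymm

end Push

/-! ### Glued homeomorphisms of the surface -/

section Glue

open scoped Classical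

variable {N : Type*} [TopologicalSpace N] [T2Space N] [ChartedSpace E2 N]
variable (D : Set N) (e : ↥D ≃ₜ ↥(Metric.closedBall (0:E2) 1))

/-- The homeomorphism of `N` supported in `D` carrying `e.symm x` to `e.symm x'`. -/
noncomputable def nmap (x x' : E2) (hx : ‖x‖ < 1) (hx' : ‖x'‖ < 1) : N → N :=
  fun m => if hm : m ∈ D then
    ((e.symm (pushK x' hx' ((pushK x hx).symm (e ⟨m, hm⟩))) : ↥D) : N) else m

lemma nmap_notin {x x' : E2} {hx : ‖x‖ < 1} {hx' : ‖x'‖ < 1} {m : N} (hm : m ∉ D) :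
    nmap D e x x' hx hx' m = m := dif_neg hm

lemma nmap_in {x x' : E2} {hx : ‖x‖ < 1} {hx' : ‖x'‖ < 1} {m : N} (hm : m ∈ D) :
    nmap D e x x' hx hx' m
      = ((e.symm (pushK x' hx' ((pushK x hx).symm (e ⟨m, hm⟩))) : ↥D) : N) := dif_pos hm

lemma nmap_mem {x x' : E2} {hx : ‖x‖ < 1} {hx' : ‖x'‖ < 1} {m : N} (hm : m ∈ D) :
    nmap D e x x' hx hx' m ∈ D := by
  rw [nmap_in D e hm]
  exact (e.symm _).2

lemma nmap_inverse (x x' : E2) (hx : ‖x‖ < 1) (hx' : ‖x'‖ < 1) (m : N) :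
    nmap D e x' x hx' hx (nmap D e x x' hx hx' m) = m := by
  by_cases hm : m ∈ D
  · rw [nmap_in D e hm, nmap_in D e (by
      exact (e.symm (pushK x' hx' ((pushK x hx).symm (e ⟨m, hm⟩)))).2)]
    set u := pushK x' hx' ((pushK x hx).symm (e ⟨m, hm⟩)) with hu
    have h1 : (⟨((e.symm u : ↥D) : N), (e.symm u).2⟩ : ↥D) = e.symm u := Subtype.coe_eta _ _
    rw [h1, Homeomorph.apply_symm_apply, hu, Equiv.symm_apply_apply, Equiv.apply_symm_apply,
      Homeomorph.symm_apply_apply]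
  · rw [nmap_notin D e hm, nmap_notin D e hm]

lemma nmap_self (x : E2) (hx hx' : ‖x‖ < 1) (m : N) :
    nmap D e x x hx hx' m = m := by
  by_cases hm : m ∈ D
  · rw [nmap_in D e hm]
    have h1 : pushK x hx' ((pushK x hx).symm (e ⟨m, hm⟩)) = e ⟨m, hm⟩ :=
      (pushK x hx).apply_symm_apply _
    rw [h1, Homeomorph.symm_apply_apply]
  · exact nmap_notin D e hm

lemma nmap_carry {x x' : E2} {hx : ‖x‖ < 1} {hx' : ‖x'‖ < 1} {m m' : N}
    (hm : m ∈ D) (hm' : m' ∈ D)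
    (hex : ((e ⟨m, hm⟩ : ↥(Metric.closedBall (0:E2) 1)) : E2) = x)
    (hex' : ((e ⟨m', hm'⟩ : ↥(Metric.closedBall (0:E2) 1)) : E2) = x') :
    nmap D e x x' hx hx' m = m' := by
  rw [nmap_in D e hm]
  have h1 : e ⟨m, hm⟩ = ⟨x, mem_K_of_lt hx⟩ := Subtype.ext hex
  have h2 : (pushK x hx).symm ⟨x, mem_K_of_lt hx⟩ = ⟨0, zero_mem_K⟩ := pushK_symm_self x hx
  have h3 : pushK x' hx' ⟨0, zero_mem_K⟩ = ⟨x', mem_K_of_lt hx'⟩ := pushK_zero x' hx'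
  rw [h1, h2, h3]
  have h4 : (⟨x', mem_K_of_lt hx'⟩ : ↥(Metric.closedBall (0:E2) 1)) = e ⟨m', hm'⟩ :=
    Subtype.ext hex'.symm
  rw [h4, Homeomorph.symm_apply_apply]

/-- norm-one points of the disk are fixed -/
lemma nmap_fix_boundary {x x' : E2} {hx : ‖x‖ < 1} {hx' : ‖x'‖ < 1} {m : N} (hm : m ∈ D)
    (hb : 1 ≤ ‖((e ⟨m, hm⟩ : ↥(Metric.closedBall (0:E2) 1)) : E2)‖) :
    nmap D e x x' hx hx' m = m := by
  rw [nmap_in D e hm, pushK_symm_boundary x hx hb, pushK_boundary x' hx' hb,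
    Homeomorph.symm_apply_apply]

/-- joint continuity of the family of glued maps -/
lemma nmap_family_cont {P : Type*} [TopologicalSpace P] [CompactSpace P] [T2Space P]
    (hD : IsClosed D)
    {ξ ζ : P → E2} (hξ : Continuous ξ) (hζ : Continuous ζ)
    (hbξ : ∀ p, ‖ξ p‖ < 1) (hbζ : ∀ p, ‖ζ p‖ < 1) :
    Continuous (fun q : P × N => nmap D e (ξ q.1) (ζ q.1) (hbξ q.1) (hbζ q.1) q.2) := by
  set f : P × N → N := fun q => nmap D e (ξ q.1) (ζ q.1) (hbξ q.1) (hbζ q.1) q.2 with hfdef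
  have hsplit : f = fun q : P × N => if q.2 ∈ D then f q else q.2 := by
    funext q
    by_cases hq : q.2 ∈ D
    · rw [if_pos hq]
    · rw [if_neg hq, hfdef]
      exact nmap_notin D e hq
  rw [hsplit]
  have hSclosed : IsClosed {q : P × N | q.2 ∈ D} := hD.preimage continuous_snd
  apply continuous_if
  · -- frontier agreement
    intro q hq
    have hqD : q.2 ∈ D := by
      exact hSclosed.frontier_subset hq
    have hsndc : Continuous (Prod.snd : P × N → N) := continuous_snd
    have hqint : q ∉ interior {q : P × N | q.2 ∈ D} := by
      rw [frontier, Set.mem_diff] at hq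
      exact hq.2
    have hqni : q.2 ∉ interior D := by
      intro hint
      apply hqint
      apply mem_interior.mpr
      refine ⟨Prod.snd ⁻¹' interior D, fun r hr => interior_subset (s := D) hr,
        isOpen_interior.preimage hsndc, hint⟩
    have hnorm1 : 1 ≤ ‖((e ⟨q.2, hqD⟩ : ↥(Metric.closedBall (0:E2) 1)) : E2)‖ := by
      by_contra hlt
      push_neg at hlt
      exact hqni ((norm_lt_one_iff_interior D e hqD).mpr hlt)
    rw [hfdef]
    exact nmap_fix_boundary D e hqD hnorm1
  · -- continuity on the closed part
    have hclos : closure {q : P × N | q.2 ∈ D} = {q : P × N | q.2 ∈ D} := hSclosed.closure_eq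
    rw [hclos, continuousOn_iff_continuous_restrict]
    -- the restricted map factors through P × ↥D
    set F : P × ↥D → N := fun r =>
      ((e.symm (pushK (ζ r.1) (hbζ r.1) ((pushK (ξ r.1) (hbξ r.1)).symm (e r.2))) : ↥D) : N)
      with hF
    have hFcont : Continuous F := by
      have h1 : Continuous (fun r : P × ↥D => (r.1, e r.2)) :=
        continuous_fst.prodMk (e.continuous.comp continuous_snd)
      have h2 : Continuous (fun r : P × ↥D =>
          (r.1, (pushK (ξ r.1) (hbξ r.1)).symm (e r.2))) := by
        refine continuous_fst.prodMk ?_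
        have h := (pushK_symm_family_cont hξ hbξ).comp h1
        exact h
      have h3 : Continuous (fun r : P × ↥D =>
          pushK (ζ r.1) (hbζ r.1) ((pushK (ξ r.1) (hbξ r.1)).symm (e r.2))) :=
        (pushK_family_cont hζ hbζ).comp h2
      exact continuous_subtype_val.comp (e.symm.continuous.comp h3)
    have hfeq : {q : P × N | q.2 ∈ D}.domRestrict f
        = F ∘ (fun r : ↥{q : P × N | q.2 ∈ D} => ((r.1.1, ⟨r.1.2, r.2⟩) : P × ↥D)) := by
      funext r
      simp only [Set.domRestrict, Function.comp, hfdef, hF]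
      rw [nmap_in D e r.2]
    rw [hfeq]
    apply hFcont.comp
    refine (continuous_fst.comp continuous_subtype_val).prodMk ?_
    exact Continuous.subtype_mk ((continuous_snd.comp continuous_subtype_val)) _
  · exact continuous_snd.continuousOn

/-- the glued homeomorphism -/
noncomputable def nhomeo (hD : IsClosed D) (x x' : E2) (hx : ‖x‖ < 1) (hx' : ‖x'‖ < 1) :
    N ≃ₜ N where
  toFun := nmap D e x x' hx hx'
  invFun := nmap D e x' x hx' hx
  left_inv := fun m => nmap_inverse D e x x' hx hx' m
  right_inv := fun m => nmap_inverse D e x' x hx' hx m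
  continuous_toFun := by
    have h1 := nmap_family_cont (P := Unit) D e hD (ξ := fun _ => x) (ζ := fun _ => x')
      continuous_const continuous_const (fun _ => hx) (fun _ => hx')
    have h2 : Continuous (fun m : N => (((), m) : Unit × N)) :=
      continuous_const.prodMk continuous_id
    exact h1.comp h2
  continuous_invFun := by
    have h1 := nmap_family_cont (P := Unit) D e hD (ξ := fun _ => x') (ζ := fun _ => x)
      continuous_const continuous_const (fun _ => hx') (fun _ => hx)
    have h2 : Continuous (fun m : N => (((), m) : Unit × N)) :=
      continuous_const.prodMk continuous_id
    exact h1.comp h2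

lemma nhomeo_apply (hD : IsClosed D) (x x' : E2) (hx : ‖x‖ < 1) (hx' : ‖x'‖ < 1) (m : N) :
    nhomeo D e hD x x' hx hx' m = nmap D e x x' hx hx' m := rfl

lemma nhomeo_symm_apply (hD : IsClosed D) (x x' : E2) (hx : ‖x‖ < 1) (hx' : ‖x'‖ < 1) (m : N) :
    (nhomeo D e hD x x' hx hx').symm m = nmap D e x' x hx' hx m := rfl

lemma nhomeo_self (hD : IsClosed D) (x : E2) (hx hx' : ‖x‖ < 1) :
    nhomeo D e hD x x hx hx' = Homeomorph.refl N :=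
  Homeomorph.ext (fun m => nmap_self D e x hx hx' m)

lemma nhomeo_congr (hD : IsClosed D) {x₁ x₂ y₁ y₂ : E2}
    (hx₁ : ‖x₁‖ < 1) (hx₂ : ‖x₂‖ < 1) (hy₁ : ‖y₁‖ < 1) (hy₂ : ‖y₂‖ < 1)
    (hx : x₁ = x₂) (hy : y₁ = y₂) :
    nhomeo D e hD x₁ y₁ hx₁ hy₁ = nhomeo D e hD x₂ y₂ hx₂ hy₂ := by
  subst hx
  subst hy
  rfl

end Glue

end DiskProof

open DiskProof

/-- Given a closed topological disk D_N in a surface N and two paths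
γ, γ' in its interior with the same endpoints, there is an isotopy (G_t) from the
identity to itself, supported in D_N, with G_t(γ(t)) = γ'(t), and this isotopy is
homotopic, rel endpoints and relative to the complement of D_N, to the constant
identity isotopy. -/
theorem disk_isotopy_carrying_path
    {N : Type*} [TopologicalSpace N]
    [T2Space N] [SecondCountableTopology N]
    [ChartedSpace (EuclideanSpace ℝ (Fin 2)) N]
    (D : Set N)
    (hdisk : Nonempty (↥D ≃ₜ ↥(Metric.closedBall (0 : EuclideanSpace ℝ (Fin 2)) 1)))
    (γ γ' : C(unitInterval, N))
    (hγ : ∀ t, γ t ∈ interior D) (hγ' : ∀ t, γ' t ∈ interior D)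
    (h0 : γ 0 = γ' 0) (h1 : γ 1 = γ' 1) :
    ∃ G : unitInterval → N ≃ₜ N,
      -- continuity of the isotopy (loop in Homeo(N))
      Continuous (fun p : unitInterval × N => G p.1 p.2) ∧
      Continuous (fun p : unitInterval × N => (G p.1).symm p.2) ∧
      G 0 = Homeomorph.refl N ∧ G 1 = Homeomorph.refl N ∧
      -- supported in D
      (∀ t, ∀ m ∉ D, G t m = m) ∧
      -- carries γ to γ'
      (∀ t, G t (γ t) = γ' t) ∧
      -- homotopic rel endpoints to the constant identity isotopy,
      -- through isotopies that are the identity outside D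
      (∃ H : unitInterval → unitInterval → N ≃ₜ N,
        Continuous (fun p : (unitInterval × unitInterval) × N => H p.1.1 p.1.2 p.2) ∧
        (∀ t, H 0 t = Homeomorph.refl N) ∧
        (∀ t, H 1 t = G t) ∧
        (∀ s, H s 0 = Homeomorph.refl N) ∧
        (∀ s, H s 1 = Homeomorph.refl N) ∧
        (∀ s t, ∀ m ∉ D, H s t m = m)) := by
  classical
  obtain ⟨e⟩ := hdisk
  haveI hcompK : CompactSpace ↥(Metric.closedBall (0 : EuclideanSpace ℝ (Fin 2)) 1) :=
    isCompact_iff_compactSpace.mp (isCompact_closedBall _ 1)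
  haveI hcompD : CompactSpace ↥D := e.symm.compactSpace
  have hD : IsClosed D := (isCompact_iff_compactSpace.mpr hcompD).isClosed
  set x : unitInterval → E2 :=
    fun t => ((e ⟨γ t, interior_subset (hγ t)⟩ : ↥(Metric.closedBall (0:E2) 1)) : E2) with hxdef
  set y : unitInterval → E2 :=
    fun t => ((e ⟨γ' t, interior_subset (hγ' t)⟩ : ↥(Metric.closedBall (0:E2) 1)) : E2) with hydef
  have hx : ∀ t, ‖x t‖ < 1 :=
    fun t => (norm_lt_one_iff_interior D e (interior_subset (hγ t))).mp (hγ t)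
  have hy : ∀ t, ‖y t‖ < 1 :=
    fun t => (norm_lt_one_iff_interior D e (interior_subset (hγ' t))).mp (hγ' t)
  have hxcont : Continuous x := by
    rw [hxdef]
    exact continuous_subtype_val.comp (e.continuous.comp
      (Continuous.subtype_mk (map_continuous γ) _))
  have hycont : Continuous y := by
    rw [hydef]
    exact continuous_subtype_val.comp (e.continuous.comp
      (Continuous.subtype_mk (map_continuous γ') _))
  have hxy0 : x 0 = y 0 := by
    rw [hxdef, hydef]
    exact congrArg (fun u : ↥D => ((e u : ↥(Metric.closedBall (0:E2) 1)) : E2)) (Subtype.ext h0)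
  have hxy1 : x 1 = y 1 := by
    rw [hxdef, hydef]
    exact congrArg (fun u : ↥D => ((e u : ↥(Metric.closedBall (0:E2) 1)) : E2)) (Subtype.ext h1)
  set ℓ : unitInterval → unitInterval → E2 :=
    fun s t => (1 - (s:ℝ)) • x t + (s:ℝ) • y t with hℓdef
  have hℓ : ∀ s t, ‖ℓ s t‖ < 1 := by
    intro s t
    have hs0 : (0:ℝ) ≤ (s:ℝ) := s.2.1
    have hs1 : (s:ℝ) ≤ 1 := s.2.2
    have hb : ‖ℓ s t‖ ≤ (1 - (s:ℝ))*‖x t‖ + (s:ℝ)*‖y t‖ := by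
      rw [hℓdef]
      calc ‖(1 - (s:ℝ)) • x t + (s:ℝ) • y t‖
          ≤ ‖(1 - (s:ℝ)) • x t‖ + ‖(s:ℝ) • y t‖ := norm_add_le _ _
        _ = (1 - (s:ℝ))*‖x t‖ + (s:ℝ)*‖y t‖ := by
            rw [norm_smul, norm_smul, Real.norm_eq_abs, Real.norm_eq_abs,
              _root_.abs_of_nonneg (by linarith), _root_.abs_of_nonneg hs0]
    rcases lt_or_eq_of_le hs1 with hlt | heq
    · nlinarith [hx t, hy t, norm_nonneg (x t), norm_nonneg (y t)]
    · rw [heq] at hb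
      simp only [sub_self, zero_mul, one_mul, zero_add] at hb
      nlinarith [hy t]
  have hℓ0 : ∀ t, ℓ 0 t = x t := by
    intro t
    rw [hℓdef]
    norm_num
  have hℓ1 : ∀ t, ℓ 1 t = y t := by
    intro t
    rw [hℓdef]
    norm_num
  have hℓs0 : ∀ s, ℓ s 0 = x 0 := by
    intro s
    rw [hℓdef]
    simp only [← hxy0]
    rw [← add_smul]
    norm_num
  have hℓs1 : ∀ s, ℓ s 1 = x 1 := by
    intro s
    rw [hℓdef]
    simp only [← hxy1]
    rw [← add_smul]
    norm_num
  have hℓcont : Continuous (fun q : unitInterval × unitInterval => ℓ q.1 q.2) := by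
    rw [hℓdef]
    exact ((continuous_const.sub (continuous_subtype_val.comp continuous_fst)).smul
      (hxcont.comp continuous_snd)).add
      ((continuous_subtype_val.comp continuous_fst).smul (hycont.comp continuous_snd))
  refine ⟨fun t => nhomeo D e hD (x t) (y t) (hx t) (hy t), ?_, ?_, ?_, ?_, ?_, ?_, ?_⟩
  · exact nmap_family_cont D e hD hxcont hycont hx hy
  · exact nmap_family_cont D e hD hycont hxcont hy hx
  · exact (nhomeo_congr D e hD (hx 0) (hx 0) (hy 0) (hx 0) rfl hxy0.symm).trans
      (nhomeo_self D e hD (x 0) (hx 0) (hx 0))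
  · exact (nhomeo_congr D e hD (hx 1) (hx 1) (hy 1) (hx 1) rfl hxy1.symm).trans
      (nhomeo_self D e hD (x 1) (hx 1) (hx 1))
  · intro t m hm
    exact nmap_notin D e hm
  · intro t
    exact nmap_carry D e (interior_subset (hγ t)) (interior_subset (hγ' t))
      (by rw [hxdef]) (by rw [hydef])
  · refine ⟨fun s t => nhomeo D e hD (x t) (ℓ s t) (hx t) (hℓ s t), ?_, ?_, ?_, ?_, ?_, ?_⟩
    · exact nmap_family_cont (P := unitInterval × unitInterval) D e hD
        (ξ := fun q => x q.2) (ζ := fun q => ℓ q.1 q.2)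
        (hxcont.comp continuous_snd) hℓcont (fun q => hx q.2) (fun q => hℓ q.1 q.2)
    · intro t
      exact (nhomeo_congr D e hD (hx t) (hx t) (hℓ 0 t) (hx t) rfl (hℓ0 t)).trans
        (nhomeo_self D e hD (x t) (hx t) (hx t))
    · intro t
      exact nhomeo_congr D e hD (hx t) (hx t) (hℓ 1 t) (hy t) rfl (hℓ1 t)
    · intro s
      exact (nhomeo_congr D e hD (hx 0) (hx 0) (hℓ s 0) (hx 0) rfl (hℓs0 s)).trans
        (nhomeo_self D e hD (x 0) (hx 0) (hx 0))
    · intro s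
      exact (nhomeo_congr D e hD (hx 1) (hx 1) (hℓ s 1) (hx 1) rfl (hℓs1 s)).trans
        (nhomeo_self D e hD (x 1) (hx 1) (hx 1))
    · intro s t m hm
      exact nmap_notin D e hm
end
end

section
/- Define a relation ≼ on the set R of pairs (X, F̂_X), where X ⊂ Fix(F) is closed and F̂_X is a lift of F|_{M\X} to the universal cover of M \ X commuting with deck transformations, by: (X, F̂_X) ≼ (Y, F̂_Y) iff X ⊂ Y ⊂ X ∪ π_X(Fix(F̂_X)) and every path in M \ Y associated to F̂_Y is also associated to F̂_X. Then ≼ is a partial order (reflexive, antisymmetric, transitive) on R. -/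
universe u

/-- A pair (X, F̂_X): a closed set X of fixed points of F together with a lift of
F|_{M\X} to the universal cover of M \ X commuting with deck transformations. -/
structure CommutingLift {M : Type u} [TopologicalSpace M] (F : M ≃ₜ M) where
  /-- the closed set of fixed points -/
  X : Set M
  closedX : IsClosed X
  fixX : ∀ x ∈ X, F x = x
  /-- the universal cover of M \ X -/
  Cover : Type u
  top : TopologicalSpace Cover
  proj : Cover → M
  projMem : ∀ c, proj c ∉ X
  covering : @IsCoveringMap Cover ↥Xᶜ top _ (fun c => ⟨proj c, projMem c⟩)
  simplyConn : @SimplyConnectedSpace Cover top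
  /-- the lift of F|_{M\X}, as a homeomorphism of the cover -/
  Fhat : @Homeomorph Cover Cover top top
  liftF : ∀ c, proj (Fhat c) = F (proj c)
  commutes : ∀ T : @Homeomorph Cover Cover top top,
    (∀ c, proj (T c) = proj c) → ∀ c, Fhat (T c) = T (Fhat c)

variable {M : Type u} [TopologicalSpace M] {F : M ≃ₜ M}

/-- A path α in M \ X is *associated* to the lift (X, F̂_X) if it lifts to a path of
the cover joining a point ĉ to F̂_X(ĉ). -/
def CommutingLift.Assoc (L : CommutingLift F) (α : C(unitInterval, M)) : Prop :=
  ∃ ahat : unitInterval → L.Cover,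
    @Continuous unitInterval L.Cover _ L.top ahat ∧
    (∀ t, L.proj (ahat t) = α t) ∧
    L.Fhat (ahat 0) = ahat 1

/-- The projection π_X(Fix(F̂_X)) of the fixed point set of the lift. -/
def CommutingLift.fixProj (L : CommutingLift F) : Set M :=
  {m | ∃ c, L.proj c = m ∧ L.Fhat c = c}

/-- The relation ≼ on commuting lifts. -/
def CommutingLift.le (L₁ L₂ : CommutingLift F) : Prop :=
  L₁.X ⊆ L₂.X ∧ L₂.X ⊆ L₁.X ∪ L₁.fixProj ∧
    ∀ α : C(unitInterval, M), L₂.Assoc α → L₁.Assoc α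

/-- A point in the projection of the fixed set of a lift `L₂` which refines `L₁`
(in the sense that constant paths associated to `L₂` are associated to `L₁`)
lies in `L₁.X ∪ L₁.fixProj`. -/
theorem CommutingLift.fixProj_mono {M : Type u} [TopologicalSpace M] {F : M ≃ₜ M}
    (L₁ L₂ : CommutingLift F)
    (h : ∀ α : C(unitInterval, M), L₂.Assoc α → L₁.Assoc α) :
    L₂.fixProj ⊆ L₁.X ∪ L₁.fixProj := by
  rintro m ⟨c, hcm, hfix⟩
  letI : TopologicalSpace L₂.Cover := L₂.top
  letI : TopologicalSpace L₁.Cover := L₁.top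
  have hassoc₂ : L₂.Assoc (ContinuousMap.const unitInterval m) :=
    ⟨fun _ => c, continuous_const, fun t => hcm, by rw [hfix]⟩
  obtain ⟨ahat, hcont, hproj, hF⟩ := h _ hassoc₂
  right
  refine ⟨ahat 0, hproj 0, ?_⟩
  have hconst : ahat = fun _ => ahat 0 := by
    refine L₁.covering.eq_of_comp_eq hcont continuous_const ?_ 0 rfl
    funext t
    exact Subtype.ext (by simp [hproj])
  rw [hF, hconst]

theorem commutingLift_le_partialOrder
    {M : Type u} [TopologicalSpace M] [T2Space M] [SecondCountableTopology M]
    [ConnectedSpace M] [ChartedSpace (EuclideanSpace ℝ (Fin 2)) M]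
    (F : M ≃ₜ M) :
    (∀ L : CommutingLift F, L.le L) ∧
    (∀ L₁ L₂ : CommutingLift F, L₁.le L₂ → L₂.le L₁ →
      L₁.X = L₂.X ∧ ∀ α : C(unitInterval, M), L₁.Assoc α ↔ L₂.Assoc α) ∧
    (∀ L₁ L₂ L₃ : CommutingLift F, L₁.le L₂ → L₂.le L₃ → L₁.le L₃) := by
  refine ⟨fun L => ⟨subset_rfl, Set.subset_union_left, fun α h => h⟩, ?_, ?_⟩
  · rintro L₁ L₂ ⟨h12, _, ha12⟩ ⟨h21, _, ha21⟩
    exact ⟨subset_antisymm h12 h21, fun α => ⟨ha21 α, ha12 α⟩⟩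
  · rintro L₁ L₂ L₃ ⟨h12, hfix12, ha12⟩ ⟨h23, hfix23, ha23⟩
    refine ⟨h12.trans h23, ?_, fun α h => ha12 α (ha23 α h)⟩
    intro m hm
    rcases hfix23 hm with h | h
    · exact hfix12 h
    · exact CommutingLift.fixProj_mono L₁ L₂ ha12 h
end
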